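/- arXiv:2309.09343 — 6 statements merged into one kernel-verified Lean document; each statement's English description precedes it below -/
import Mathlib

section
/- Let G : ℝ → ℝ be C¹ and coercive, V : ℝ → ℝ Lipschitz and 1-periodic. Suppose f₁, f₂ ∈ C¹(ℝ) are 1-periodic, with constants H₁, H₂ such that fᵢ'(x) + G(fᵢ(x)) + V(x) = Hᵢ for all x ∈ ℝ (i = 1,2), and ∫₀¹ f₁ = θ₁ < θ₂ = ∫₀¹ f₂. Then f₁(x) < f₂(x) for all x ∈ ℝ. -/
open Set

lemma gron0 (w : ℝ → ℝ) (L a b : ℝ) (hab : a ≤ b) (hwd : Differentiable ℝ w)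
    (hd : ∀ x ∈ Set.Icc a b, -(L * w x) ≤ deriv w x) :
    Real.exp (L * a) * w a ≤ Real.exp (L * b) * w b := by
  have hderiv : ∀ x : ℝ, HasDerivAt (fun t => Real.exp (L * t) * w t)
      (Real.exp (L * x) * (L * 1) * w x + Real.exp (L * x) * deriv w x) x := by
    intro x
    exact (((hasDerivAt_id x).const_mul L).exp).mul (hwd x).hasDerivAt
  have hmono : MonotoneOn (fun t => Real.exp (L * t) * w t) (Set.Icc a b) := by
    apply monotoneOn_of_deriv_nonneg (convex_Icc a b)
    · exact ((Real.continuous_exp.comp (continuous_const.mul continuous_id)).mul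
        hwd.continuous).continuousOn
    · intro x hx
      exact (hderiv x).differentiableAt.differentiableWithinAt
    · intro x hx
      rw [(hderiv x).deriv]
      have hx' : x ∈ Set.Icc a b := interior_subset hx
      have h1 := hd x hx'
      have h2 : (0:ℝ) < Real.exp (L * x) := Real.exp_pos _
      nlinarith
  exact hmono (Set.left_mem_Icc.2 hab) (Set.right_mem_Icc.2 hab) hab

theorem stmt0
    (G V f₁ f₂ : ℝ → ℝ) (H₁ H₂ θ₁ θ₂ : ℝ)
    (hG : ContDiff ℝ 1 G)
    (hGcoercive : Filter.Tendsto G (Filter.cocompact ℝ) Filter.atTop)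
    (hVlip : ∃ K, LipschitzWith K V)
    (hVper : Function.Periodic V 1)
    (hf₁ : ContDiff ℝ 1 f₁) (hf₂ : ContDiff ℝ 1 f₂)
    (hf₁per : Function.Periodic f₁ 1) (hf₂per : Function.Periodic f₂ 1)
    (hode₁ : ∀ x, deriv f₁ x + G (f₁ x) + V x = H₁)
    (hode₂ : ∀ x, deriv f₂ x + G (f₂ x) + V x = H₂)
    (hθ₁ : (∫ x in (0:ℝ)..1, f₁ x) = θ₁)
    (hθ₂ : (∫ x in (0:ℝ)..1, f₂ x) = θ₂)
    (hθ : θ₁ < θ₂) :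
    ∀ x, f₁ x < f₂ x := by
  have hf₁d : Differentiable ℝ f₁ := hf₁.differentiable one_ne_zero
  have hf₂d : Differentiable ℝ f₂ := hf₂.differentiable one_ne_zero
  set w : ℝ → ℝ := fun x => f₂ x - f₁ x with hwdef
  have hwd : Differentiable ℝ w := hf₂d.sub hf₁d
  have hwper : Function.Periodic w 1 := hf₂per.sub hf₁per
  -- ranges are bounded
  obtain ⟨M₁, hM₁⟩ := (isCompact_Icc (a := (0:ℝ)) (b := 1)).exists_bound_of_continuousOn
    hf₁d.continuous.continuousOn
  obtain ⟨M₂, hM₂⟩ := (isCompact_Icc (a := (0:ℝ)) (b := 1)).exists_bound_of_continuousOn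
    hf₂d.continuous.continuousOn
  set M : ℝ := max M₁ M₂ with hMdef
  have hrange : ∀ (f : ℝ → ℝ), Function.Periodic f 1 →
      (∀ x ∈ Icc (0:ℝ) 1, ‖f x‖ ≤ M) → ∀ x, f x ∈ Icc (-M) M := by
    intro f hper hb x
    have h1 : f (Int.fract x) = f x := by
      have h := (hper.int_mul ⌊x⌋) (Int.fract x)
      rw [mul_one] at h
      rw [← h]
      congr 1
      rw [Int.fract]
      ring
    have h2 : Int.fract x ∈ Icc (0:ℝ) 1 :=
      ⟨Int.fract_nonneg x, (Int.fract_lt_one x).le⟩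
    have := hb _ h2
    rw [h1] at this
    rw [Real.norm_eq_abs, abs_le] at this
    exact ⟨this.1, this.2⟩
  have hr₁ : ∀ x, f₁ x ∈ Icc (-M) M := by
    refine hrange f₁ hf₁per (fun x hx => (hM₁ x hx).trans (le_max_left _ _))
  have hr₂ : ∀ x, f₂ x ∈ Icc (-M) M := by
    refine hrange f₂ hf₂per (fun x hx => (hM₂ x hx).trans (le_max_right _ _))
  -- Lipschitz constant for G on Icc (-M) M
  obtain ⟨L₀, hL₀⟩ := (isCompact_Icc (a := -M) (b := M)).exists_bound_of_continuousOn
    (hG.continuous_deriv le_rfl).continuousOn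
  set L : ℝ := max L₀ 0 with hLdef
  have hL : 0 ≤ L := le_max_right _ _
  have hGL : ∀ x : ℝ, |G (f₂ x) - G (f₁ x)| ≤ L * |w x| := by
    intro x
    have := (convex_Icc (-M) M).norm_image_sub_le_of_norm_deriv_le
      (f := G) (C := L) (fun y _ => (hG.differentiable one_ne_zero) y)
      (fun y hy => (hL₀ y hy).trans (le_max_left _ _)) (hr₁ x) (hr₂ x)
    simpa only [Real.norm_eq_abs] using this
  -- ODE for w
  have hwode : ∀ x, deriv w x = (H₂ - H₁) - (G (f₂ x) - G (f₁ x)) := by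
    intro x
    have : deriv w x = deriv f₂ x - deriv f₁ x := deriv_sub (hf₂d x) (hf₁d x)
    rw [this]
    have h1 := hode₁ x
    have h2 := hode₂ x
    linarith
  -- w is positive somewhere in [0,1]
  have hy : ∃ y ∈ Icc (0:ℝ) 1, 0 < w y := by
    by_contra h
    push_neg at h
    have hint : (∫ x in (0:ℝ)..1, w x) = θ₂ - θ₁ := by
      rw [hwdef]
      rw [intervalIntegral.integral_sub (hf₂d.continuous.intervalIntegrable 0 1)
        (hf₁d.continuous.intervalIntegrable 0 1), hθ₁, hθ₂]
    have hnn : 0 ≤ ∫ x in (0:ℝ)..1, -w x :=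
      intervalIntegral.integral_nonneg zero_le_one (fun u hu => by
        have := h u hu; linarith)
    rw [intervalIntegral.integral_neg, hint] at hnn
    linarith
  obtain ⟨y, hyI, hypos⟩ := hy
  -- main argument
  intro x₀
  by_contra hcon
  push_neg at hcon
  have hwx₀ : w x₀ ≤ 0 := by simp [hwdef]; linarith
  rcases le_total H₁ H₂ with hH | hH
  · -- find a zero of w to the right of y
    set n : ℤ := ⌈1 - x₀⌉ + 1 with hndef
    set c : ℝ := x₀ + n with hcdef
    have hwc : w c = w x₀ := by
      have := (hwper.int_mul n) x₀
      simpa [hcdef, mul_one] using this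
    have hyc : y < c := by
      have h1 : (1 : ℝ) - x₀ ≤ ⌈1 - x₀⌉ := Int.le_ceil _
      have h2 : y ≤ 1 := hyI.2
      have : (n : ℝ) = (⌈1 - x₀⌉ : ℝ) + 1 := by push_cast [hndef]; ring
      rw [hcdef, this]
      linarith
    set T : Set ℝ := Icc y c ∩ {x | w x ≤ 0} with hTdef
    have hTclosed : IsClosed T := isClosed_Icc.inter (isClosed_le hwd.continuous continuous_const)
    have hTne : T.Nonempty := ⟨c, ⟨⟨hyc.le, le_rfl⟩, by rw [mem_setOf_eq, hwc]; exact hwx₀⟩⟩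
    have hTbdd : BddBelow T := ⟨y, fun x hx => hx.1.1⟩
    set z : ℝ := sInf T with hzdef
    have hzT : z ∈ T := hTclosed.csInf_mem hTne hTbdd
    have hyz : y < z := by
      rcases lt_or_eq_of_le hzT.1.1 with h | h
      · exact h
      · exfalso; have := hzT.2; rw [mem_setOf_eq, ← h] at this; linarith
    -- w z = 0
    have hwz : w z = 0 := by
      have hiv := intermediate_value_Icc' hyz.le hwd.continuous.continuousOn
      have h0 : (0:ℝ) ∈ Icc (w z) (w y) := ⟨hzT.2, hypos.le⟩
      obtain ⟨z', hz'I, hz'⟩ := hiv h0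
      have hz'T : z' ∈ T := ⟨⟨hz'I.1, hz'I.2.trans hzT.1.2⟩, by rw [mem_setOf_eq, hz']⟩
      have : z ≤ z' := csInf_le hTbdd hz'T
      have hzz : z' = z := le_antisymm hz'I.2 this
      rw [← hzz, hz']
    have hwpos : ∀ x ∈ Icc y z, 0 ≤ w x := by
      intro x hx
      rcases lt_or_eq_of_le hx.2 with h | h
      · by_contra hneg
        push_neg at hneg
        have hxT : x ∈ T := ⟨⟨hx.1, hx.2.trans hzT.1.2⟩, hneg.le⟩
        exact absurd (csInf_le hTbdd hxT) (not_le.2 h)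
      · rw [h, hwz]
    have := gron0 w L y z hyz.le hwd (fun x hx => by
      rw [hwode x]
      have h1 := hGL x
      have h2 := hwpos x hx
      rw [abs_of_nonneg h2] at h1
      have := abs_le.1 h1
      linarith)
    rw [hwz, mul_zero] at this
    have := mul_pos (Real.exp_pos (L * y)) hypos
    linarith
  · -- find a zero of w to the left of y
    set n : ℤ := ⌈x₀⌉ + 1 with hndef
    set c : ℝ := x₀ - n with hcdef
    have hwc : w c = w x₀ := by
      have := hwper.sub_int_mul_eq (x := x₀) n
      simpa [hcdef, mul_one] using this
    have hyc : c < y := by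
      have h1 : (x₀ : ℝ) ≤ ⌈x₀⌉ := Int.le_ceil _
      have h2 : (0:ℝ) ≤ y := hyI.1
      have : (n : ℝ) = (⌈x₀⌉ : ℝ) + 1 := by push_cast [hndef]; ring
      rw [hcdef, this]
      linarith
    set T : Set ℝ := Icc c y ∩ {x | w x ≤ 0} with hTdef
    have hTclosed : IsClosed T := isClosed_Icc.inter (isClosed_le hwd.continuous continuous_const)
    have hTne : T.Nonempty := ⟨c, ⟨⟨le_rfl, hyc.le⟩, by rw [mem_setOf_eq, hwc]; exact hwx₀⟩⟩
    have hTbdd : BddAbove T := ⟨y, fun x hx => hx.1.2⟩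
    set z : ℝ := sSup T with hzdef
    have hzT : z ∈ T := hTclosed.csSup_mem hTne hTbdd
    have hzy : z < y := by
      rcases lt_or_eq_of_le hzT.1.2 with h | h
      · exact h
      · exfalso; have := hzT.2; rw [mem_setOf_eq, h] at this; linarith
    have hwz : w z = 0 := by
      have hiv := intermediate_value_Icc hzy.le hwd.continuous.continuousOn
      have h0 : (0:ℝ) ∈ Icc (w z) (w y) := ⟨hzT.2, hypos.le⟩
      obtain ⟨z', hz'I, hz'⟩ := hiv h0
      have hz'T : z' ∈ T := ⟨⟨hzT.1.1.trans hz'I.1, hz'I.2⟩, by rw [mem_setOf_eq, hz']⟩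
      have : z' ≤ z := le_csSup hTbdd hz'T
      have hzz : z' = z := le_antisymm this hz'I.1
      rw [← hzz, hz']
    have hwpos : ∀ x ∈ Icc z y, 0 ≤ w x := by
      intro x hx
      rcases lt_or_eq_of_le hx.1 with h | h
      · by_contra hneg
        push_neg at hneg
        have hxT : x ∈ T := ⟨⟨hzT.1.1.trans hx.1, hx.2⟩, hneg.le⟩
        exact absurd (le_csSup hTbdd hxT) (not_le.2 h)
      · rw [← h, hwz]
    -- reverse time
    set w' : ℝ → ℝ := fun t => w (-t) with hw'def
    have hw'd : Differentiable ℝ w' := hwd.comp differentiable_neg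
    have hw'deriv : ∀ t, deriv w' t = -(deriv w (-t)) := by
      intro t
      have h1 : HasDerivAt w' (deriv w (-t) * (-1)) t :=
        (hwd (-t)).hasDerivAt.comp t (hasDerivAt_neg t)
      rw [h1.deriv]; ring
    have hyz' : (-y : ℝ) ≤ -z := by linarith
    have := gron0 w' L (-y) (-z) hyz' hw'd (fun x hx => by
      rw [hw'deriv x, hwode (-x)]
      have hxI : -x ∈ Icc z y := ⟨by have := hx.2; linarith, by have := hx.1; linarith⟩
      have h1 := hGL (-x)
      have h2 := hwpos (-x) hxI
      rw [abs_of_nonneg h2] at h1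
      have h3 := abs_le.1 h1
      have : w' x = w (-x) := rfl
      rw [this]
      linarith)
    have he1 : w' (-y) = w y := by simp [hw'def]
    have he2 : w' (-z) = w z := by simp [hw'def]
    rw [he1, he2, hwz, mul_zero] at this
    have := mul_pos (Real.exp_pos (L * -y)) hypos
    linarith
end

section
/- Let G : ℝ → ℝ be C¹ and V : ℝ → ℝ 1-periodic. Suppose f₁, f₂ ∈ C¹(ℝ) are 1-periodic with ∫₀¹ f₁ = θ₁ < θ₂ = ∫₀¹ f₂, f₁ < f₂ pointwise, and each satisfies fᵢ' + G(fᵢ) + V = Hᵢ for constants H₁, H₂. Set g = f₂ − f₁ and K = max{|G'(p)| : min_{[0,1]} f₁ ≤ p ≤ max_{[0,1]} f₂}. Then (θ₂ − θ₁) e^{−K} ≤ g(x) ≤ (θ₂ − θ₁) e^{K} for all x ∈ ℝ. -/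
theorem stmt1
    (G V f₁ f₂ : ℝ → ℝ) (H₁ H₂ θ₁ θ₂ : ℝ)
    (hG : ContDiff ℝ 1 G)
    (hVper : Function.Periodic V 1)
    (hf₁ : ContDiff ℝ 1 f₁) (hf₂ : ContDiff ℝ 1 f₂)
    (hf₁per : Function.Periodic f₁ 1) (hf₂per : Function.Periodic f₂ 1)
    (hθ₁ : (∫ x in (0:ℝ)..1, f₁ x) = θ₁)
    (hθ₂ : (∫ x in (0:ℝ)..1, f₂ x) = θ₂)
    (hθ : θ₁ < θ₂)
    (hlt : ∀ x, f₁ x < f₂ x)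
    (hode₁ : ∀ x, deriv f₁ x + G (f₁ x) + V x = H₁)
    (hode₂ : ∀ x, deriv f₂ x + G (f₂ x) + V x = H₂)
    (K : ℝ)
    (hK : K = sSup ((fun p => |deriv G p|) ''
      Set.Icc (sInf (f₁ '' Set.Icc 0 1)) (sSup (f₂ '' Set.Icc 0 1)))) :
    ∀ x, (θ₂ - θ₁) * Real.exp (-K) ≤ f₂ x - f₁ x ∧
      f₂ x - f₁ x ≤ (θ₂ - θ₁) * Real.exp K := by
  have hper_eq : ∀ (f : ℝ → ℝ), Function.Periodic f 1 → ∀ x, f (Int.fract x) = f x := by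
    intro f h x
    have := h.sub_int_mul_eq (x := x) ⌊x⌋
    rw [Int.fract]; simpa using this
  have hfract : ∀ x : ℝ, Int.fract x ∈ Set.Icc (0:ℝ) 1 :=
    fun x => ⟨Int.fract_nonneg x, (Int.fract_lt_one x).le⟩
  set g : ℝ → ℝ := fun x => f₂ x - f₁ x with hgdef
  have hf₁d : Differentiable ℝ f₁ := hf₁.differentiable one_ne_zero
  have hf₂d : Differentiable ℝ f₂ := hf₂.differentiable one_ne_zero
  have hgdiff : Differentiable ℝ g := hf₂d.sub hf₁d
  have hgcont : Continuous g := hgdiff.continuous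
  have hgpos : ∀ x, 0 < g x := fun x => sub_pos.mpr (hlt x)
  have hgper : Function.Periodic g 1 := by
    intro x; simp only [hgdef]; rw [hf₂per x, hf₁per x]
  -- bounds on f₁, f₂ values
  set p₁ := sInf (f₁ '' Set.Icc 0 1) with hp₁def
  set p₂ := sSup (f₂ '' Set.Icc 0 1) with hp₂def
  have hne : (Set.Icc (0:ℝ) 1).Nonempty := ⟨0, by norm_num⟩
  have hf₁lb : ∀ x, p₁ ≤ f₁ x := by
    intro x
    rw [← hper_eq f₁ hf₁per x]
    exact csInf_le (isCompact_Icc.image hf₁.continuous |>.bddBelow)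
      ⟨Int.fract x, hfract x, rfl⟩
  have hf₂ub : ∀ x, f₂ x ≤ p₂ := by
    intro x
    rw [← hper_eq f₂ hf₂per x]
    exact le_csSup (isCompact_Icc.image hf₂.continuous |>.bddAbove)
      ⟨Int.fract x, hfract x, rfl⟩
  have hp₁₂ : p₁ ≤ p₂ := le_trans (hf₁lb 0) (le_trans (hlt 0).le (hf₂ub 0))
  have hGd : Differentiable ℝ G := hG.differentiable one_ne_zero
  have hG'cont : Continuous (deriv G) := hG.continuous_deriv le_rfl
  have hKub : ∀ ξ ∈ Set.Icc p₁ p₂, |deriv G ξ| ≤ K := by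
    intro ξ hξ
    rw [hK]
    exact le_csSup ((isCompact_Icc.image (hG'cont.abs)).bddAbove) ⟨ξ, hξ, rfl⟩
  have hK0 : 0 ≤ K := le_trans (abs_nonneg _) (hKub p₁ ⟨le_rfl, hp₁₂⟩)
  -- MVT bound
  have hΔ : ∀ x, |G (f₂ x) - G (f₁ x)| ≤ K * g x := by
    intro x
    obtain ⟨ξ, hξ, hslope⟩ := exists_deriv_eq_slope G (hlt x)
      hGd.continuous.continuousOn hGd.differentiableOn
    have hgx : (0:ℝ) < f₂ x - f₁ x := hgpos x
    have heq : G (f₂ x) - G (f₁ x) = deriv G ξ * (f₂ x - f₁ x) := by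
      rw [hslope]; field_simp
    rw [heq, abs_mul, abs_of_pos hgx]
    have hξmem : ξ ∈ Set.Icc p₁ p₂ :=
      ⟨le_trans (hf₁lb x) hξ.1.le, le_trans hξ.2.le (hf₂ub x)⟩
    exact mul_le_mul_of_nonneg_right (hKub ξ hξmem) hgx.le
  -- derivative of g
  have hg' : ∀ x, deriv g x = (H₂ - H₁) - (G (f₂ x) - G (f₁ x)) := by
    intro x
    have h1 := hode₁ x; have h2 := hode₂ x
    have : deriv g x = deriv f₂ x - deriv f₁ x := deriv_sub (hf₂d x) (hf₁d x)
    linarith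
  have hφ : ∀ x, HasDerivAt (fun y => Real.log (g y)) (deriv g x / g x) x :=
    fun x => ((hgdiff x).hasDerivAt).log (hgpos x).ne'
  -- global extrema over a period
  obtain ⟨xM, hxM01, hxMmax⟩ := isCompact_Icc.exists_isMaxOn hne hgcont.continuousOn
  obtain ⟨xm, hxm01, hxmmin⟩ := isCompact_Icc.exists_isMinOn hne hgcont.continuousOn
  set M := g xM with hMdef
  set m := g xm with hmdef
  have hub : ∀ x, g x ≤ M := by
    intro x; rw [← hper_eq g hgper x]; exact isMaxOn_iff.mp hxMmax _ (hfract x)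
  have hlb : ∀ x, m ≤ g x := by
    intro x; rw [← hper_eq g hgper x]; exact isMinOn_iff.mp hxmmin _ (hfract x)
  have hmpos : 0 < m := hgpos xm
  -- main inequality : M ≤ m * exp K
  have hmain : Real.log M ≤ Real.log m + K := by
    rcases le_or_gt 0 (H₂ - H₁) with hc | hc
    · -- find min point in [xM, xM+1]
      obtain ⟨v, hvmem, hvmin⟩ := isCompact_Icc.exists_isMinOn
        (Set.nonempty_Icc.mpr (by linarith : xM ≤ xM + 1)) hgcont.continuousOn
      have hvm : g v ≤ m := by
        rcases le_or_gt xM xm with h | h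
        · exact isMinOn_iff.mp hvmin xm ⟨h, by linarith [hxm01.2, hxM01.1]⟩
        · have h1 : g (xm + 1) = g xm := hgper xm
          have := isMinOn_iff.mp hvmin (xm + 1) ⟨by linarith [hxM01.2, hxm01.1], by linarith⟩
          linarith
      set ψ : ℝ → ℝ := fun y => Real.log (g y) + K * y with hψdef
      have hψ : ∀ y, HasDerivAt ψ (deriv g y / g y + K) y := by
        intro y
        exact (hφ y).add (by simpa using (hasDerivAt_id y).const_mul K)
      have hmono : Monotone ψ := by
        apply monotone_of_deriv_nonneg (fun y => (hψ y).differentiableAt)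
        intro y
        rw [(hψ y).deriv]
        have h1 : -(K * g y) ≤ deriv g y := by
          have := (abs_le.mp (hΔ y)).2
          rw [hg' y]; linarith
        have h2 : -K ≤ deriv g y / g y := by
          rw [le_div_iff₀ (hgpos y)]
          calc -K * g y = -(K * g y) := by ring
          _ ≤ deriv g y := h1
        linarith
      have := hmono hvmem.1
      simp only [hψdef] at this
      have hlogv : Real.log (g v) ≤ Real.log m :=
        (Real.log_le_log_iff (hgpos v) hmpos).mpr hvm
      have hKv : K * (v - xM) ≤ K := by
        have : v - xM ≤ 1 := by linarith [hvmem.2]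
        nlinarith
      nlinarith
    · -- find max point in [xm, xm+1]
      obtain ⟨v, hvmem, hvmax⟩ := isCompact_Icc.exists_isMaxOn
        (Set.nonempty_Icc.mpr (by linarith : xm ≤ xm + 1)) hgcont.continuousOn
      have hvM : M ≤ g v := by
        rcases le_or_gt xm xM with h | h
        · exact isMaxOn_iff.mp hvmax xM ⟨h, by linarith [hxM01.2, hxm01.1]⟩
        · have h1 : g (xM + 1) = g xM := hgper xM
          have := isMaxOn_iff.mp hvmax (xM + 1) ⟨by linarith [hxm01.2, hxM01.1], by linarith⟩
          linarith
      set ψ : ℝ → ℝ := fun y => K * y - Real.log (g y) with hψdef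
      have hψ : ∀ y, HasDerivAt ψ (K - deriv g y / g y) y := by
        intro y
        exact HasDerivAt.sub (by simpa using (hasDerivAt_id y).const_mul K) (hφ y)
      have hmono : Monotone ψ := by
        apply monotone_of_deriv_nonneg (fun y => (hψ y).differentiableAt)
        intro y
        rw [(hψ y).deriv]
        have h1 : deriv g y ≤ K * g y := by
          have := (abs_le.mp (hΔ y)).1
          rw [hg' y]; linarith
        have h2 : deriv g y / g y ≤ K := by
          rw [div_le_iff₀ (hgpos y)]
          calc deriv g y ≤ K * g y := h1
          _ = K * g y := rfl
        linarith
      have := hmono hvmem.1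
      simp only [hψdef] at this
      have hlogv : Real.log M ≤ Real.log (g v) :=
        (Real.log_le_log_iff (hgpos xM) (hgpos v)).mpr hvM
      have hKv : K * (v - xm) ≤ K := by
        have : v - xm ≤ 1 := by linarith [hvmem.2]
        nlinarith
      nlinarith
  have hMm : M ≤ m * Real.exp K := by
    calc M = Real.exp (Real.log M) := (Real.exp_log (hgpos xM)).symm
    _ ≤ Real.exp (Real.log m + K) := Real.exp_le_exp.mpr hmain
    _ = m * Real.exp K := by rw [Real.exp_add, Real.exp_log hmpos]
  -- integral comparisons
  have hint₁ : IntervalIntegrable f₁ MeasureTheory.volume 0 1 :=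
    hf₁.continuous.intervalIntegrable 0 1
  have hint₂ : IntervalIntegrable f₂ MeasureTheory.volume 0 1 :=
    hf₂.continuous.intervalIntegrable 0 1
  have hintg : IntervalIntegrable g MeasureTheory.volume 0 1 :=
    hgcont.intervalIntegrable 0 1
  have hθg : (∫ x in (0:ℝ)..1, g x) = θ₂ - θ₁ := by
    simp only [hgdef]
    rw [intervalIntegral.integral_sub hint₂ hint₁, hθ₁, hθ₂]
  have hmθ : m ≤ θ₂ - θ₁ := by
    have h := intervalIntegral.integral_mono_on (by norm_num : (0:ℝ) ≤ 1)
      intervalIntegrable_const hintg (fun y _ => hlb y)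
    rw [hθg, intervalIntegral.integral_const, smul_eq_mul] at h
    linarith
  have hθM : θ₂ - θ₁ ≤ M := by
    have h := intervalIntegral.integral_mono_on (by norm_num : (0:ℝ) ≤ 1)
      hintg intervalIntegrable_const (fun y _ => hub y)
    rw [hθg, intervalIntegral.integral_const, smul_eq_mul] at h
    linarith
  -- conclusion
  intro x
  constructor
  · have h1 : M * Real.exp (-K) ≤ m := by
      have := mul_le_mul_of_nonneg_right hMm (Real.exp_pos (-K)).le
      calc M * Real.exp (-K) ≤ m * Real.exp K * Real.exp (-K) := this
      _ = m := by rw [mul_assoc, ← Real.exp_add]; simp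
    have h2 : (θ₂ - θ₁) * Real.exp (-K) ≤ M * Real.exp (-K) :=
      mul_le_mul_of_nonneg_right hθM (Real.exp_pos (-K)).le
    have := hlb x
    simp only [hgdef] at this
    linarith
  · have h1 : m * Real.exp K ≤ (θ₂ - θ₁) * Real.exp K :=
      mul_le_mul_of_nonneg_right hmθ (Real.exp_pos K).le
    have := hub x
    simp only [hgdef] at this
    linarith
end

section
/- Let G : ℝ → ℝ be C¹ and p₁ < p₂ with G'(p₁) < 0 < G'(p₂), and L = G'(p₂)/(G'(p₂) − G'(p₁)). For any ℓ ∈ (0, min(L,1−L)), there exists a 1-periodic function f ∈ C^{1,1}(ℝ) with p₁ ≤ f(x) ≤ p₂ for all x, f(x) = p₁ for x ∈ [0, L−ℓ], f(x) = p₂ for x ∈ [L, 1−ℓ], and ∫₀¹ G'(f(x)) dx = 0. -/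
open Real Set Topology Filter

lemma expNegInvGlue_mono : Monotone expNegInvGlue := by
  intro x y h
  rcases le_or_gt x 0 with hx | hx
  · rw [expNegInvGlue.zero_of_nonpos hx]; exact expNegInvGlue.nonneg y
  · unfold expNegInvGlue
    rw [if_neg (not_le.2 hx), if_neg (not_le.2 (hx.trans_le h))]
    exact Real.exp_le_exp.2 (by
      have : y⁻¹ ≤ x⁻¹ := one_div x ▸ one_div y ▸ one_div_le_one_div_of_le hx h
      linarith)

lemma smoothTransition_mono : Monotone Real.smoothTransition := by
  intro x y h
  unfold Real.smoothTransition
  rw [div_le_div_iff₀ (Real.smoothTransition.pos_denom x) (Real.smoothTransition.pos_denom y)]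
  have h1 : expNegInvGlue x ≤ expNegInvGlue y := expNegInvGlue_mono h
  have h2 : expNegInvGlue (1 - y) ≤ expNegInvGlue (1 - x) := expNegInvGlue_mono (by linarith)
  have h3 := expNegInvGlue.nonneg x
  have h4 := expNegInvGlue.nonneg (1 - y)
  nlinarith [mul_le_mul h1 h2 h4 (expNegInvGlue.nonneg y)]

noncomputable def pl (δ s₁ s₂ t : ℝ) : ℝ :=
  Real.smoothTransition ((t - s₁)/δ) - Real.smoothTransition ((t - s₂)/δ)

lemma pl_contDiff (δ s₁ s₂ : ℝ) : ContDiff ℝ 2 (fun t => pl δ s₁ s₂ t) := by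
  unfold pl
  apply ContDiff.sub
  · exact Real.smoothTransition.contDiff.comp ((contDiff_id.sub contDiff_const).div_const δ)
  · exact Real.smoothTransition.contDiff.comp ((contDiff_id.sub contDiff_const).div_const δ)

lemma pl_left {δ s₁ s₂ t : ℝ} (hδ : 0 < δ) (hs : s₁ ≤ s₂) (ht : t ≤ s₁) :
    pl δ s₁ s₂ t = 0 := by
  unfold pl
  rw [Real.smoothTransition.zero_of_nonpos (div_nonpos_iff.2 (Or.inr ⟨by linarith, hδ.le⟩)),
    Real.smoothTransition.zero_of_nonpos (div_nonpos_iff.2 (Or.inr ⟨by linarith, hδ.le⟩))]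
  ring

lemma pl_mid {δ s₁ s₂ t : ℝ} (hδ : 0 < δ) (ht1 : s₁ + δ ≤ t) (ht2 : t ≤ s₂) :
    pl δ s₁ s₂ t = 1 := by
  unfold pl
  rw [Real.smoothTransition.one_of_one_le ((one_le_div hδ).2 (by linarith)),
    Real.smoothTransition.zero_of_nonpos (div_nonpos_iff.2 (Or.inr ⟨by linarith, hδ.le⟩))]
  ring

lemma pl_right {δ s₁ s₂ t : ℝ} (hδ : 0 < δ) (hs : s₁ ≤ s₂) (ht : s₂ + δ ≤ t) :
    pl δ s₁ s₂ t = 0 := by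
  unfold pl
  rw [Real.smoothTransition.one_of_one_le ((one_le_div hδ).2 (by linarith)),
    Real.smoothTransition.one_of_one_le ((one_le_div hδ).2 (by linarith))]
  ring

lemma pl_mem {δ s₁ s₂ : ℝ} (hδ : 0 < δ) (hs : s₁ ≤ s₂) (t : ℝ) :
    pl δ s₁ s₂ t ∈ Icc (0:ℝ) 1 := by
  unfold pl
  constructor
  · have h : (t - s₂)/δ ≤ (t - s₁)/δ := by gcongr
    have := smoothTransition_mono h
    linarith
  · have h1 := Real.smoothTransition.le_one ((t - s₁)/δ)
    have h2 := Real.smoothTransition.nonneg ((t - s₂)/δ)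
    linarith

lemma fract_glue {n : ℕ∞} {W : ℝ → ℝ} {ε c : ℝ} (hW : ContDiff ℝ n W)
    (hε : 0 < ε) (hε1 : ε < 1)
    (h0 : ∀ y ≤ ε, W y = c) (h1 : ∀ y, 1 - ε ≤ y → W y = c) (x : ℝ) :
    ∃ g : ℝ → ℝ, ContDiff ℝ n g ∧ (fun t => W (Int.fract t)) =ᶠ[𝓝 x] g ∧
      deriv g x = deriv W (Int.fract x) := by
  rcases eq_or_lt_of_le (Int.floor_le x) with hfl | hfl
  · refine ⟨fun _ => c, contDiff_const, ?_, ?_⟩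
    · have hmem : Ioo (x - ε) (x + ε) ∈ 𝓝 x := Ioo_mem_nhds (by linarith) (by linarith)
      filter_upwards [hmem] with t ht
      rcases le_or_gt x t with h | h
      · have hfloor : ⌊t⌋ = ⌊x⌋ := by
          rw [Int.floor_eq_iff]
          constructor
          · rw [hfl]; exact h
          · push_cast
            rw [hfl]; linarith [ht.2]
        have : Int.fract t = t - x := by rw [Int.fract, hfloor, hfl]
        exact h0 _ (by rw [this]; linarith [ht.2])
      · have hfloor : ⌊t⌋ = ⌊x⌋ - 1 := by
          rw [Int.floor_eq_iff]
          push_cast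
          constructor
          · rw [hfl]; linarith [ht.1]
          · rw [hfl]; linarith
        have : Int.fract t = t - x + 1 := by
          rw [Int.fract, hfloor]; push_cast; rw [hfl]; ring
        exact h1 _ (by rw [this]; linarith [ht.1])
    · have hfr : Int.fract x = 0 := by rw [Int.fract, hfl]; simp
      rw [hfr, deriv_const]
      have hev : W =ᶠ[𝓝 (0:ℝ)] fun _ => c := by
        filter_upwards [Iio_mem_nhds hε] with y hy
        exact h0 y (le_of_lt hy)
      rw [hev.deriv_eq, deriv_const]
  · refine ⟨fun t => W (t - (⌊x⌋ : ℝ)), hW.comp (contDiff_id.sub contDiff_const), ?_, ?_⟩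
    · have hmem : Ioo ((⌊x⌋ : ℝ)) ((⌊x⌋ : ℝ) + 1) ∈ 𝓝 x :=
        Ioo_mem_nhds hfl (Int.lt_floor_add_one x)
      filter_upwards [hmem] with t ht
      have hfloor : ⌊t⌋ = ⌊x⌋ := by
        rw [Int.floor_eq_iff]
        exact ⟨ht.1.le, by push_cast; exact ht.2⟩
      rw [Int.fract, hfloor]
    · rw [deriv_comp_sub_const, Int.fract]

lemma fract_comp {n : ℕ∞} {W : ℝ → ℝ} {ε c : ℝ} (hW : ContDiff ℝ n W)
    (hε : 0 < ε) (hε1 : ε < 1)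
    (h0 : ∀ y ≤ ε, W y = c) (h1 : ∀ y, 1 - ε ≤ y → W y = c) :
    ContDiff ℝ n (fun t => W (Int.fract t)) ∧
      deriv (fun t => W (Int.fract t)) = fun t => deriv W (Int.fract t) := by
  constructor
  · rw [contDiff_iff_contDiffAt]
    intro x
    obtain ⟨g, hg, hev, -⟩ := fract_glue hW hε hε1 h0 h1 x
    exact hg.contDiffAt.congr_of_eventuallyEq hev
  · funext x
    obtain ⟨g, hg, hev, hd⟩ := fract_glue hW hε hε1 h0 h1 x
    rw [hev.deriv_eq, hd]

set_option maxHeartbeats 1600000 in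
theorem stmt3
    (G : ℝ → ℝ) (p₁ p₂ L : ℝ)
    (hG : ContDiff ℝ 1 G) (hp : p₁ < p₂)
    (h₁ : deriv G p₁ < 0) (h₂ : 0 < deriv G p₂)
    (hL : L = deriv G p₂ / (deriv G p₂ - deriv G p₁))
    (ℓ : ℝ) (hℓ : ℓ ∈ Set.Ioo (0:ℝ) (min L (1 - L))) :
    ∃ f : ℝ → ℝ, ContDiff ℝ 1 f ∧ (∃ C, LipschitzWith C (deriv f)) ∧
      Function.Periodic f 1 ∧
      (∀ x, f x ∈ Set.Icc p₁ p₂) ∧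
      (∀ x ∈ Set.Icc (0:ℝ) (L - ℓ), f x = p₁) ∧
      (∀ x ∈ Set.Icc L (1 - ℓ), f x = p₂) ∧
      (∫ x in (0:ℝ)..1, deriv G (f x)) = 0 := by
  obtain ⟨hℓ0, hℓm⟩ := hℓ
  rw [lt_min_iff] at hℓm
  obtain ⟨hℓL, hℓ1L⟩ := hℓm
  set a := deriv G p₁ with ha
  set b := deriv G p₂ with hb
  have hba : 0 < b - a := by linarith
  have hL0 : 0 < L := by rw [hL]; exact div_pos h₂ hba
  have hL1 : L < 1 := by rw [hL, div_lt_one hba]; linarith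
  have hzero : L * a + (1 - L) * b = 0 := by
    rw [hL]; field_simp; ring
  have hGder : Continuous (deriv G) := hG.continuous_deriv le_rfl
  obtain ⟨K, hK⟩ := isCompact_Icc.exists_bound_of_continuousOn
    (hGder.continuousOn (s := Icc p₁ p₂))
  have hKa : -a ≤ K := by
    have := hK p₁ (left_mem_Icc.2 hp.le)
    rw [Real.norm_eq_abs] at this
    calc -a ≤ |a| := neg_le_abs a
    _ ≤ K := this
  have hK0 : 0 < K := lt_of_lt_of_le (by linarith) hKa
  set δ := min (ℓ/8) (ℓ*(-a)/(16*K)) with hδ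
  have hδ0 : 0 < δ := lt_min (by linarith)
    (div_pos (mul_pos hℓ0 (neg_pos.2 h₁)) (by positivity))
  have hδℓ : δ ≤ ℓ/8 := min_le_left _ _
  have hδK : δ * K ≤ ℓ * (-a) / 16 := by
    have h' := min_le_right (ℓ/8) (ℓ*(-a)/(16*K))
    calc δ * K ≤ (ℓ*(-a)/(16*K)) * K := by
          exact mul_le_mul_of_nonneg_right h' hK0.le
    _ = ℓ * (-a) / 16 := by field_simp
  -- the interpolating family
  set F : ℝ → ℝ → ℝ := fun r t =>
    p₁ + (r - p₁) * pl δ (L - ℓ) (1 - δ - ℓ/2) t + (p₂ - r) * pl δ (L - δ) (1 - ℓ) t with hF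
  have hs1 : L - ℓ ≤ 1 - δ - ℓ/2 := by linarith
  have hs2 : L - δ ≤ 1 - ℓ := by linarith
  -- pointwise descriptions
  have hFleft : ∀ r t, t ≤ L - ℓ → F r t = p₁ := by
    intro r t ht
    rw [hF]
    simp only
    rw [pl_left hδ0 hs1 ht, pl_left hδ0 hs2 (by linarith)]
    ring
  have hFright : ∀ r t, 1 - ℓ/2 ≤ t → F r t = p₁ := by
    intro r t ht
    rw [hF]; simp only
    rw [pl_right hδ0 hs1 (by linarith), pl_right hδ0 hs2 (by linarith)]
    ring
  have hFp2 : ∀ r t, L ≤ t → t ≤ 1 - ℓ → F r t = p₂ := by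
    intro r t ht1 ht2
    rw [hF]; simp only
    rw [pl_mid hδ0 (by linarith) (by linarith), pl_mid hδ0 (by linarith) (by linarith)]
    ring
  have hFq1 : ∀ r t, L - ℓ + δ ≤ t → t ≤ L - δ → F r t = r := by
    intro r t ht1 ht2
    rw [hF]; simp only
    rw [pl_mid hδ0 (by linarith) (by linarith), pl_left hδ0 hs2 (by linarith)]
    ring
  have hFq2 : ∀ r t, 1 - ℓ + δ ≤ t → t ≤ 1 - δ - ℓ/2 → F r t = r := by
    intro r t ht1 ht2
    rw [hF]; simp only
    rw [pl_mid hδ0 (by linarith) (by linarith), pl_right hδ0 hs2 (by linarith)]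
    ring
  have hFrange : ∀ r, r ∈ Icc p₁ p₂ → ∀ t, F r t ∈ Icc p₁ p₂ := by
    intro r hr t
    obtain ⟨hA1, hA2⟩ := pl_mem (δ := δ) hδ0 hs1 t
    obtain ⟨hB1, hB2⟩ := pl_mem (δ := δ) hδ0 hs2 t
    rw [hF]; simp only
    constructor
    · nlinarith [hr.1, hr.2]
    · nlinarith [hr.1, hr.2]
  have hFcont : Continuous (fun p : ℝ × ℝ => F p.1 p.2) := by
    rw [hF]
    apply Continuous.add
    · apply Continuous.add continuous_const
      exact (continuous_fst.sub continuous_const).mul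
        ((pl_contDiff δ (L - ℓ) (1 - δ - ℓ/2)).continuous.comp continuous_snd)
    · exact (continuous_const.sub continuous_fst).mul
        ((pl_contDiff δ (L - δ) (1 - ℓ)).continuous.comp continuous_snd)
  have hFsmooth : ∀ r, ContDiff ℝ 2 (F r) := by
    intro r
    rw [hF]
    apply ContDiff.add
    · exact (contDiff_const.add (contDiff_const.mul (pl_contDiff _ _ _)))
    · exact contDiff_const.mul (pl_contDiff _ _ _)
  -- integrability
  have hInt : ∀ r u v : ℝ, IntervalIntegrable (fun x => deriv G (F r x)) MeasureTheory.volume u v := by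
    intro r u v
    exact (hGder.comp ((hFsmooth r).continuous)).intervalIntegrable u v
  -- the parametric integral
  set If : ℝ → ℝ := fun r => ∫ x in (0:ℝ)..1, deriv G (F r x) with hIf
  have hIcont : Continuous If := by
    rw [hIf]
    apply intervalIntegral.continuous_parametric_intervalIntegral_of_continuous'
      (f := fun r x => deriv G (F r x))
    exact hGder.comp hFcont
  clear_value If
  clear_value F
  clear_value δ
  clear_value a b
  -- decomposition of the integral
  have key : ∀ r ∈ Icc p₁ p₂, ∃ E : ℝ, |E| ≤ 4*(K*δ) ∧
      If r = (L - ℓ)*a + (ℓ - 2*δ)*(deriv G r) + (1 - ℓ - L)*b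
        + (ℓ/2 - 2*δ)*(deriv G r) + (ℓ/2)*a + E := by
    intro r hr
    have hconst : ∀ u v c' : ℝ, u ≤ v → (∀ x, u ≤ x → x ≤ v → deriv G (F r x) = c') →
        (∫ x in u..v, deriv G (F r x)) = (v - u) * c' := by
      intro u v c' huv h
      rw [intervalIntegral.integral_congr (g := fun _ => c')
          (by rw [uIcc_of_le huv]; intro x hx; exact h x hx.1 hx.2),
        intervalIntegral.integral_const, smul_eq_mul]
    have hbd : ∀ u v : ℝ, u ≤ v → |∫ x in u..v, deriv G (F r x)| ≤ K * (v - u) := by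
      intro u v huv
      have h := intervalIntegral.norm_integral_le_of_norm_le_const (C := K)
        (f := fun x => deriv G (F r x)) (a := u) (b := v)
        (fun x _ => by rw [Real.norm_eq_abs]; exact hK _ (hFrange r hr x))
      rw [Real.norm_eq_abs, abs_of_nonneg (show (0:ℝ) ≤ v - u by linarith)] at h
      exact h
    have E : ∀ u v w : ℝ, (∫ x in u..w, deriv G (F r x)) =
        (∫ x in u..v, deriv G (F r x)) + (∫ x in v..w, deriv G (F r x)) :=
      fun u v w => (intervalIntegral.integral_add_adjacent_intervals (hInt r u v) (hInt r v w)).symm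
    have hsplit : If r =
        (∫ x in (0:ℝ)..(L-ℓ), deriv G (F r x))
        + ((∫ x in (L-ℓ)..(L-ℓ+δ), deriv G (F r x))
        + ((∫ x in (L-ℓ+δ)..(L-δ), deriv G (F r x))
        + ((∫ x in (L-δ)..L, deriv G (F r x))
        + ((∫ x in L..(1-ℓ), deriv G (F r x))
        + ((∫ x in (1-ℓ)..(1-ℓ+δ), deriv G (F r x))
        + ((∫ x in (1-ℓ+δ)..(1-δ-ℓ/2), deriv G (F r x))
        + ((∫ x in (1-δ-ℓ/2)..(1-ℓ/2), deriv G (F r x))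
        + (∫ x in (1-ℓ/2)..1, deriv G (F r x))))))))) := by
      rw [hIf]
      simp only
      rw [E 0 (L-ℓ) 1, E (L-ℓ) (L-ℓ+δ) 1, E (L-ℓ+δ) (L-δ) 1, E (L-δ) L 1, E L (1-ℓ) 1,
        E (1-ℓ) (1-ℓ+δ) 1, E (1-ℓ+δ) (1-δ-ℓ/2) 1, E (1-δ-ℓ/2) (1-ℓ/2) 1]
    have hc1 : (∫ x in (0:ℝ)..(L-ℓ), deriv G (F r x)) = (L-ℓ - 0) * a :=
      hconst 0 (L-ℓ) a (by linarith) (fun x hx1 hx2 => by rw [hFleft r x hx2, ← ha])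
    have hc3 : (∫ x in (L-ℓ+δ)..(L-δ), deriv G (F r x)) = (L-δ-(L-ℓ+δ)) * (deriv G r) :=
      hconst _ _ _ (by linarith) (fun x hx1 hx2 => by rw [hFq1 r x hx1 hx2])
    have hc5 : (∫ x in L..(1-ℓ), deriv G (F r x)) = (1-ℓ-L) * b :=
      hconst _ _ _ (by linarith) (fun x hx1 hx2 => by rw [hFp2 r x hx1 hx2, ← hb])
    have hc7 : (∫ x in (1-ℓ+δ)..(1-δ-ℓ/2), deriv G (F r x)) = (1-δ-ℓ/2-(1-ℓ+δ)) * (deriv G r) :=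
      hconst _ _ _ (by linarith) (fun x hx1 hx2 => by rw [hFq2 r x hx1 hx2])
    have hc9 : (∫ x in (1-ℓ/2)..(1:ℝ), deriv G (F r x)) = (1-(1-ℓ/2)) * a :=
      hconst _ _ _ (by linarith) (fun x hx1 hx2 => by rw [hFright r x hx1, ← ha])
    have hb2 := hbd (L-ℓ) (L-ℓ+δ) (by linarith)
    have hb4 := hbd (L-δ) L (by linarith)
    have hb6 := hbd (1-ℓ) (1-ℓ+δ) (by linarith)
    have hb8 := hbd (1-δ-ℓ/2) (1-ℓ/2) (by linarith)
    refine ⟨(∫ x in (L-ℓ)..(L-ℓ+δ), deriv G (F r x)) + (∫ x in (L-δ)..L, deriv G (F r x))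
      + (∫ x in (1-ℓ)..(1-ℓ+δ), deriv G (F r x)) + (∫ x in (1-δ-ℓ/2)..(1-ℓ/2), deriv G (F r x)),
      ?_, ?_⟩
    · have e2 : K * (L-ℓ+δ-(L-ℓ)) = K*δ := by ring
      have e4 : K * (L-(L-δ)) = K*δ := by ring
      have e6 : K * (1-ℓ+δ-(1-ℓ)) = K*δ := by ring
      have e8 : K * (1-ℓ/2-(1-δ-ℓ/2)) = K*δ := by ring
      rw [e2] at hb2; rw [e4] at hb4; rw [e6] at hb6; rw [e8] at hb8
      obtain ⟨h2a, h2b⟩ := abs_le.1 hb2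
      obtain ⟨h4a, h4b⟩ := abs_le.1 hb4
      obtain ⟨h6a, h6b⟩ := abs_le.1 hb6
      obtain ⟨h8a, h8b⟩ := abs_le.1 hb8
      exact abs_le.2 ⟨by linarith, by linarith⟩
    · rw [hsplit, hc1, hc3, hc5, hc7, hc9]
      ring
  -- sign estimates
  have hIp2 : 0 < If p₂ := by
    obtain ⟨E, hE, heq⟩ := key p₂ (right_mem_Icc.2 hp.le)
    rw [← hb] at heq
    obtain ⟨hE1, hE2⟩ := abs_le.1 hE
    have t1 : 0 ≤ (ℓ/2 - 4*δ)*b := mul_nonneg (by linarith) h₂.le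
    have t3 : ℓ*a < 0 := mul_neg_of_pos_of_neg hℓ0 h₁
    have k1 : K*δ = δ*K := mul_comm _ _
    nlinarith [hE1, hE2, heq, hzero, t1, t3, hδK, k1]
  have hIp1 : If p₁ < 0 := by
    obtain ⟨E, hE, heq⟩ := key p₁ (left_mem_Icc.2 hp.le)
    rw [← ha] at heq
    obtain ⟨hE1, hE2⟩ := abs_le.1 hE
    have t1 : (ℓ/2 - 4*δ)*a ≤ 0 := mul_nonpos_of_nonneg_of_nonpos (by linarith) h₁.le
    have t2 : 0 < ℓ*b := mul_pos hℓ0 h₂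
    have t3 : ℓ*a < 0 := mul_neg_of_pos_of_neg hℓ0 h₁
    have k1 : K*δ = δ*K := mul_comm _ _
    nlinarith [hE1, hE2, heq, hzero, t1, t2, t3, hδK, k1]
  -- intermediate value theorem
  have hIVT := intermediate_value_Icc hp.le hIcont.continuousOn
  obtain ⟨q, hq, hq0⟩ := hIVT ⟨hIp1.le, hIp2.le⟩
  simp only [hIf] at hq0
  -- gluing data
  set ε : ℝ := min (L - ℓ) (ℓ/2) with hε
  have hε0 : 0 < ε := lt_min (by linarith) (by linarith)
  have hε1 : ε < 1 := lt_of_le_of_lt (min_le_right _ _) (by linarith)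
  have h0 : ∀ y ≤ ε, F q y = p₁ := fun y hy => hFleft q y (hy.trans (min_le_left _ _))
  have h1 : ∀ y, 1 - ε ≤ y → F q y = p₁ := fun y hy =>
    hFright q y (by have := min_le_right (L - ℓ) (ℓ/2); linarith)
  obtain ⟨hf2, hfd⟩ := fract_comp (n := 2) (hFsmooth q) hε0 hε1 h0 h1
  -- derivative data
  have hV : ContDiff ℝ 1 (deriv (F q)) := by
    have h2' := hFsmooth q
    rw [show (2 : WithTop ℕ∞) = 1 + 1 by norm_num, contDiff_succ_iff_deriv] at h2'
    exact h2'.2.2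
  have hd0 : ∀ y ≤ ε/2, deriv (F q) y = 0 := by
    intro y hy
    have hev : F q =ᶠ[𝓝 y] fun _ => p₁ := by
      filter_upwards [Iio_mem_nhds (show y < ε by linarith)] with z hz
      exact h0 z (le_of_lt hz)
    rw [hev.deriv_eq, deriv_const]
  have hd1 : ∀ y, 1 - ε/2 ≤ y → deriv (F q) y = 0 := by
    intro y hy
    have hev : F q =ᶠ[𝓝 y] fun _ => p₁ := by
      filter_upwards [Ioi_mem_nhds (show 1 - ε < y by linarith)] with z hz
      exact h1 z (le_of_lt hz)
    rw [hev.deriv_eq, deriv_const]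
  obtain ⟨hg1, hgd⟩ := fract_comp (n := 1) hV (by linarith) (by linarith) hd0 hd1
  -- bound on second derivative
  have hV' : Continuous (deriv (deriv (F q))) := hV.continuous_deriv le_rfl
  obtain ⟨M, hM⟩ := isCompact_Icc.exists_bound_of_continuousOn
    (hV'.continuousOn (s := Icc (0:ℝ) 1))
  have hM0 : 0 ≤ M := le_trans (norm_nonneg _) (hM 0 (left_mem_Icc.2 zero_le_one))
  refine ⟨fun x => F q (Int.fract x), hf2.of_le (by exact one_le_two), ⟨⟨M, hM0⟩, ?_⟩, ?_, ?_, ?_, ?_, ?_⟩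
  · -- Lipschitz derivative
    rw [hfd]
    apply lipschitzWith_of_nnnorm_deriv_le
    · exact hg1.differentiable (by norm_num)
    · intro x
      rw [hgd]
      have hMx : ‖deriv (deriv (F q)) (Int.fract x)‖ ≤ M :=
        hM _ ⟨Int.fract_nonneg x, (Int.fract_lt_one x).le⟩
      change ‖deriv (deriv (F q)) (Int.fract x)‖ ≤ M
      exact hMx
  · -- periodicity
    intro x
    show F q (Int.fract (x + 1)) = F q (Int.fract x)
    rw [Int.fract_add_one]
  · -- range
    intro x
    exact hFrange q hq _
  · -- equals p₁ on [0, L-ℓ]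
    intro x hx
    show F q (Int.fract x) = p₁
    rw [Int.fract_eq_self.2 ⟨hx.1, lt_of_le_of_lt hx.2 (by linarith)⟩]
    exact hFleft q x hx.2
  · -- equals p₂ on [L, 1-ℓ]
    intro x hx
    show F q (Int.fract x) = p₂
    rw [Int.fract_eq_self.2 ⟨by linarith [hx.1], lt_of_le_of_lt hx.2 (by linarith)⟩]
    exact hFp2 q x hx.1 hx.2
  · -- integral zero
    have hEq : EqOn (fun x => deriv G (F q (Int.fract x))) (fun x => deriv G (F q x))
        (uIcc (0:ℝ) 1) := by
      rw [uIcc_of_le zero_le_one]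
      intro x hx
      rcases eq_or_lt_of_le hx.2 with h1' | h1'
      · simp only
        rw [h1', Int.fract_one, hFleft q 0 (by linarith), hFright q 1 (by linarith)]
      · simp only [Int.fract_eq_self.2 ⟨hx.1, h1'⟩]
    exact (intervalIntegral.integral_congr hEq).trans hq0
end

section
/- Let H : ℝ × ℝ → ℝ be continuous with x ↦ H(p,x) 1-periodic for each p. Suppose F : ℝ → ℝ is a 1-periodic C² solution of F''(x) + H(θ + F'(x), x) = λ for some constants θ, λ ∈ ℝ. Let U(θ) = max{H(θ,x) : x ∈ [0,1]} and L(θ) = min{H(θ,x) : x ∈ [0,1]}. Then L(θ) ≤ λ ≤ U(θ). -/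
open Set Filter Topology

lemma aux_max (F : ℝ → ℝ) (hF : ContDiff ℝ 2 F) (x₀ : ℝ)
    (hmax : ∀ x, F x ≤ F x₀) :
    deriv F x₀ = 0 ∧ deriv (deriv F) x₀ ≤ 0 := by
  have hd1 : ContDiff ℝ 2 F := hF
  have h2 : ContDiff ℝ 1 (deriv F) := by
    have h21 : ContDiff ℝ (1+1 : ℕ) F := by exact_mod_cast hF
    exact (contDiff_succ_iff_deriv.mp h21).2.2
  have hdiffF : Differentiable ℝ F := hF.differentiable (by norm_num)
  have hdiffg : Differentiable ℝ (deriv F) := h2.differentiable (by norm_num)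
  have hloc : IsLocalMax F x₀ := Filter.Eventually.of_forall hmax
  have hder0 : deriv F x₀ = 0 := hloc.deriv_eq_zero
  refine ⟨hder0, ?_⟩
  by_contra hpos
  push_neg at hpos
  -- slope of deriv F at x₀ tends to deriv (deriv F) x₀ > 0
  have hslope : Tendsto (slope (deriv F) x₀) (𝓝[≠] x₀) (𝓝 (deriv (deriv F) x₀)) :=
    hasDerivAt_iff_tendsto_slope.mp (hdiffg x₀).hasDerivAt
  have hev : ∀ᶠ x in 𝓝[>] x₀, 0 < slope (deriv F) x₀ x := by
    have := hslope.mono_left (nhdsWithin_mono x₀ (fun y hy => ne_of_gt hy))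
    exact this.eventually (eventually_gt_nhds hpos)
  obtain ⟨u, hu, hsub⟩ := mem_nhdsGT_iff_exists_Ioo_subset.mp hev
  have hgpos : ∀ x ∈ Ioo x₀ u, 0 < deriv F x := by
    intro x hx
    have h1 : 0 < slope (deriv F) x₀ x := hsub hx
    have h2 : slope (deriv F) x₀ x = deriv F x / (x - x₀) := by
      rw [slope_def_field, hder0]; ring
    have hx0 : 0 < x - x₀ := sub_pos.mpr hx.1
    rw [h2] at h1
    exact (div_pos_iff.mp h1).resolve_right (fun h => absurd h.2 (not_lt.mpr hx0.le)) |>.1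
  have hmono : StrictMonoOn F (Icc x₀ u) := by
    apply strictMonoOn_of_deriv_pos (convex_Icc _ _) hF.continuous.continuousOn
    intro x hx
    rw [interior_Icc] at hx
    exact hgpos x hx
  have hxu : x₀ < u := hu
  have hu' : x₀ < (x₀ + u) / 2 := by linarith
  have hu'' : (x₀ + u) / 2 ≤ u := by linarith
  have := hmono (left_mem_Icc.mpr (by linarith)) ⟨hu'.le, hu''⟩ hu'
  exact absurd this (not_lt.mpr (hmax _))

lemma aux_min (F : ℝ → ℝ) (hF : ContDiff ℝ 2 F) (x₀ : ℝ)
    (hmin : ∀ x, F x₀ ≤ F x) :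
    deriv F x₀ = 0 ∧ 0 ≤ deriv (deriv F) x₀ := by
  have := aux_max (fun x => -F x) hF.neg x₀ (fun x => neg_le_neg (hmin x))
  have e1 : deriv (fun x => -F x) = fun x => -deriv F x := by
    funext x; exact deriv.neg
  rw [e1] at this
  have e2 : deriv (fun x => -deriv F x) x₀ = -deriv (deriv F) x₀ := deriv.neg
  rw [e2] at this
  constructor
  · linarith [this.1, neg_eq_zero.mp this.1]
  · linarith [this.2]

theorem stmt14
    (H : ℝ → ℝ → ℝ) (θ lam : ℝ) (F : ℝ → ℝ)
    (hH : Continuous fun q : ℝ × ℝ => H q.1 q.2)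
    (hHper : ∀ p, Function.Periodic (H p) 1)
    (hF : ContDiff ℝ 2 F) (hFper : Function.Periodic F 1)
    (hode : ∀ x, deriv (deriv F) x + H (θ + deriv F x) x = lam) :
    sInf ((H θ) '' Set.Icc 0 1) ≤ lam ∧ lam ≤ sSup ((H θ) '' Set.Icc 0 1) := by
  have hcont : Continuous F := hF.continuous
  have hHθ : Continuous (H θ) := hH.comp (continuous_const.prodMk continuous_id)
  have hcomp : IsCompact (Icc (0:ℝ) 1) := isCompact_Icc
  have hne : (Icc (0:ℝ) 1).Nonempty := ⟨0, by norm_num⟩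
  -- global bound via fract
  have hglob : ∀ y : ℝ, ∃ z ∈ Icc (0:ℝ) 1, F z = F y := by
    intro y
    refine ⟨Int.fract y, ⟨Int.fract_nonneg y, (Int.fract_lt_one y).le⟩, ?_⟩
    have h := hFper.sub_int_mul_eq (x := y) (n := ⌊y⌋)
    rw [mul_one] at h
    rw [show Int.fract y = y - ⌊y⌋ from rfl]
    exact h
  obtain ⟨x₀, hx₀mem, hx₀⟩ := hcomp.exists_isMaxOn hne hcont.continuousOn
  obtain ⟨x₁, hx₁mem, hx₁⟩ := hcomp.exists_isMinOn hne hcont.continuousOn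
  have hmax : ∀ x, F x ≤ F x₀ := by
    intro x; obtain ⟨z, hz, hze⟩ := hglob x; rw [← hze]; exact hx₀ hz
  have hmin : ∀ x, F x₁ ≤ F x := by
    intro x; obtain ⟨z, hz, hze⟩ := hglob x; rw [← hze]; exact hx₁ hz
  obtain ⟨hd0, hdd0⟩ := aux_max F hF x₀ hmax
  obtain ⟨hd1, hdd1⟩ := aux_min F hF x₁ hmin
  constructor
  · have := hode x₁
    rw [hd1, add_zero] at this
    have hle : sInf ((H θ) '' Icc 0 1) ≤ H θ x₁ :=
      csInf_le (hcomp.bddBelow_image hHθ.continuousOn) ⟨x₁, hx₁mem, rfl⟩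
    linarith
  · have := hode x₀
    rw [hd0, add_zero] at this
    have hle : H θ x₀ ≤ sSup ((H θ) '' Icc 0 1) :=
      le_csSup (hcomp.bddAbove_image hHθ.continuousOn) ⟨x₀, hx₀mem, rfl⟩
    linarith
end

section
/- Let H : ℝ × ℝ → ℝ be continuous, coercive in p uniformly in x, and 1-periodic in x. Suppose F : ℝ → ℝ is a 1-periodic C² solution of F''(x) + H(θ + F'(x), x) = λ with L(θ) ≤ λ ≤ U(θ), where U(θ) = max_{x∈[0,1]} H(θ,x). Define p₋(θ) = min_{x∈[0,1]} min{p : H(p,x) ≤ U(θ)} and p₊(θ) = max_{x∈[0,1]} max{p : H(p,x) ≤ U(θ)}. Then p₋(θ) ≤ θ + F'(x) ≤ p₊(θ) for all x ∈ ℝ. -/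
theorem stmt15
    (H : ℝ → ℝ → ℝ) (θ lam U : ℝ) (F : ℝ → ℝ)
    (hH : Continuous fun q : ℝ × ℝ => H q.1 q.2)
    (hcoer : ∀ C : ℝ, ∃ R : ℝ, ∀ p x : ℝ, R ≤ |p| → C ≤ H p x)
    (hHper : ∀ p, Function.Periodic (H p) 1)
    (hF : ContDiff ℝ 2 F) (hFper : Function.Periodic F 1)
    (hode : ∀ x, deriv (deriv F) x + H (θ + deriv F x) x = lam)
    (hU : U = sSup ((H θ) '' Set.Icc 0 1))
    (hlam : sInf ((H θ) '' Set.Icc 0 1) ≤ lam ∧ lam ≤ U)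
    (pminus pplus : ℝ)
    (hpminus : pminus = sInf {p : ℝ | ∃ x ∈ Set.Icc (0:ℝ) 1, H p x ≤ U})
    (hpplus : pplus = sSup {p : ℝ | ∃ x ∈ Set.Icc (0:ℝ) 1, H p x ≤ U}) :
    ∀ x, pminus ≤ θ + deriv F x ∧ θ + deriv F x ≤ pplus := by
  set S : Set ℝ := {p : ℝ | ∃ x ∈ Set.Icc (0:ℝ) 1, H p x ≤ U} with hS
  set G : ℝ → ℝ := deriv F with hGdef
  -- G is C¹
  have hG1 : ContDiff ℝ 1 G := by
    have hF2 : ContDiff ℝ ((1:ℕ∞) + 1) F := hF.of_le (by norm_num)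
    exact (contDiff_succ_iff_deriv.mp hF2).2.2
  have hGdiff : Differentiable ℝ G := hG1.differentiable one_ne_zero
  have hGcont : Continuous G := hGdiff.continuous
  -- G periodic with period 1
  have hGper : Function.Periodic G 1 := by
    intro x
    have h1 : (fun y => F (y + 1)) = F := funext hFper
    calc G (x + 1) = deriv (fun y => F (y + 1)) x := by
          rw [deriv_comp_add_const]
      _ = G x := by rw [h1]
  -- G y = G (Int.fract y)
  have hfract : ∀ y : ℝ, G (Int.fract y) = G y := by
    intro y
    have h := hGper.sub_int_mul_eq (x := y) ⌊y⌋
    simp only [mul_one] at h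
    unfold Int.fract
    exact h
  -- S is bounded
  obtain ⟨R, hR⟩ := hcoer (U + 1)
  have hSsub : S ⊆ Set.Icc (-R) R := by
    intro p hp
    obtain ⟨x, _, hpx⟩ := hp
    rcases le_or_gt R |p| with h | h
    · linarith [hR p x h]
    · exact ⟨(abs_lt.mp h).1.le, (abs_lt.mp h).2.le⟩
  have hSbddAbove : BddAbove S := ⟨R, fun p hp => (hSsub hp).2⟩
  have hSbddBelow : BddBelow S := ⟨-R, fun p hp => (hSsub hp).1⟩
  -- θ ∈ S
  have hHθcont : Continuous (H θ) :=
    hH.comp (continuous_const.prodMk continuous_id)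
  have hbddim : BddAbove ((H θ) '' Set.Icc 0 1) :=
    (isCompact_Icc.image hHθcont).bddAbove
  have hθS : θ ∈ S := by
    refine ⟨0, by norm_num, ?_⟩
    rw [hU]
    exact le_csSup hbddim ⟨0, by norm_num, rfl⟩
  -- at a global extremum x₁ of G, H (θ + G x₁) x₁ = lam
  have hcrit : ∀ x₁ : ℝ, IsLocalExtr G x₁ → θ + G x₁ ∈ S := by
    intro x₁ hext
    have hd0 : deriv G x₁ = 0 := hext.deriv_eq_zero
    have hHx : H (θ + G x₁) x₁ = lam := by
      have := hode x₁
      rw [hd0] at this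
      linarith
    have hper' : H (θ + G x₁) (Int.fract x₁) = lam := by
      have h := (hHper (θ + G x₁)).sub_int_mul_eq (x := x₁) ⌊x₁⌋
      simp only [mul_one] at h
      unfold Int.fract
      rw [h, hHx]
    exact ⟨Int.fract x₁, ⟨Int.fract_nonneg x₁, (Int.fract_lt_one x₁).le⟩,
      hper'.le.trans hlam.2⟩
  -- extremum points of G on [0,1] extend to global extrema
  obtain ⟨xmax, hxmaxmem, hxmax⟩ :=
    isCompact_Icc.exists_isMaxOn (Set.nonempty_Icc.mpr zero_le_one) hGcont.continuousOn
  obtain ⟨xmin, hxminmem, hxmin⟩ :=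
    isCompact_Icc.exists_isMinOn (Set.nonempty_Icc.mpr zero_le_one) hGcont.continuousOn
  have hmaxglob : ∀ y, G y ≤ G xmax := by
    intro y
    rw [← hfract y]
    exact hxmax ⟨Int.fract_nonneg y, (Int.fract_lt_one y).le⟩
  have hminglob : ∀ y, G xmin ≤ G y := by
    intro y
    rw [← hfract y]
    exact hxmin ⟨Int.fract_nonneg y, (Int.fract_lt_one y).le⟩
  have hmaxS : θ + G xmax ∈ S := by
    refine hcrit xmax (Or.inr ?_)
    exact IsMaxOn.isLocalMax (s := Set.univ) (fun y _ => hmaxglob y) Filter.univ_mem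
  have hminS : θ + G xmin ∈ S := by
    refine hcrit xmin (Or.inl ?_)
    exact IsMinOn.isLocalMin (s := Set.univ) (fun y _ => hminglob y) Filter.univ_mem
  intro x
  constructor
  · rw [hpminus]
    calc sInf S ≤ θ + G xmin := csInf_le hSbddBelow hminS
      _ ≤ θ + G x := by linarith [hminglob x]
  · rw [hpplus]
    calc θ + G x ≤ θ + G xmax := by linarith [hmaxglob x]
      _ ≤ sSup S := le_csSup hSbddAbove hmaxS
end

section
/- Let G₁ : ℝ → ℝ be even, C², with G₁(0)=0, G₁(p) > 0 and G₁'(p) > 0 for p > 0, and M := −inf{G₁''(p)/(G₁'(p))² : p > 0} ∈ (0,∞). Fix d ≥ 2 and R > 0, let J(p) = −(log(1−p)+p)/(M(d−1)), p_R = J^{−1}(R), and define the even convex C² function Ğ(p) = J(|p|) for |p| ≤ p_R and Ğ(p) = R + J'(p_R)(|p|−p_R) + ½ J''(p_R)(|p|−p_R)² for |p| > p_R. Then for every r ≤ R, the sublevel set S_r = {p ∈ ℝ^d : G₁(p₁) + Σ_{i=2}^d Ğ(p_i) ≤ r} is convex. -/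
noncomputable def phi (x : ℝ) : ℝ := (1 - |x|) * Real.exp |x|

lemma phi_bounds {y : ℝ} (h : |y| ≤ 1) : 1 - y ^ 2 ≤ phi y ∧ phi y ≤ 1 := by
  have ha : 0 ≤ |y| := abs_nonneg y
  constructor
  · have h2 := Real.add_one_le_exp (|y|)
    have h3 : (1 - |y|) * (1 + |y|) ≤ (1 - |y|) * Real.exp |y| :=
      mul_le_mul_of_nonneg_left (by linarith) (by linarith)
    have h4 : (1 - |y|) * (1 + |y|) = 1 - y ^ 2 := by rw [← sq_abs]; ring
    rw [h4] at h3; exact h3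
  · have h2 := Real.add_one_le_exp (-|y|)
    have h3 : (1 - |y|) * Real.exp |y| ≤ Real.exp (-|y|) * Real.exp |y| :=
      mul_le_mul_of_nonneg_right (by linarith) (Real.exp_pos _).le
    rw [← Real.exp_add] at h3
    simpa [phi] using h3

lemma phi_hasDerivAt_zero : HasDerivAt phi 0 0 := by
  rw [hasDerivAt_iff_tendsto_slope]
  rw [tendsto_zero_iff_abs_tendsto_zero]
  apply squeeze_zero' (g := fun y => |y|)
  · exact Filter.Eventually.of_forall fun y => abs_nonneg _
  · have h1 : ∀ᶠ y in nhds (0 : ℝ), |y| ≤ 1 := by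
      filter_upwards [Metric.ball_mem_nhds (0 : ℝ) one_pos] with y hy
      exact le_of_lt (by simpa [Real.dist_eq] using hy)
    filter_upwards [h1.filter_mono nhdsWithin_le_nhds, self_mem_nhdsWithin] with y hy1 hy2
    have hy0 : y ≠ 0 := hy2
    have h2 : |phi y - 1| ≤ y ^ 2 := by
      obtain ⟨hlb, hub⟩ := phi_bounds hy1
      rw [abs_sub_le_iff]; constructor <;> nlinarith
    have hphi0 : phi 0 = 1 := by simp [phi]
    simp only [Function.comp_apply, slope_def_field, hphi0, sub_zero]
    rw [div_eq_mul_inv, abs_mul, abs_inv]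
    calc |phi y - 1| * |y|⁻¹ ≤ y ^ 2 * |y|⁻¹ :=
          mul_le_mul_of_nonneg_right h2 (by positivity)
      _ = |y| := by
          rw [← sq_abs, sq]
          field_simp
  · have : Filter.Tendsto (fun y : ℝ => |y|) (nhds 0) (nhds |0|) :=
      continuous_abs.tendsto 0
    simpa using this.mono_left nhdsWithin_le_nhds

lemma phi_deriv : deriv phi = fun x => -x * Real.exp |x| := by
  funext x
  rcases lt_trichotomy x 0 with hx | hx | hx
  · have hev : phi =ᶠ[nhds x] fun y => (1 + y) * Real.exp (-y) := by
      filter_upwards [Iio_mem_nhds hx] with y hy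
      have hy' : y < 0 := hy
      simp only [phi, abs_of_neg hy']; ring_nf
    rw [hev.deriv_eq]
    have h1 : HasDerivAt (fun y : ℝ => (1 + y) * Real.exp (-y))
        (1 * Real.exp (-x) + (1 + x) * (Real.exp (-x) * (-1))) x :=
      ((hasDerivAt_id x).const_add 1).mul ((hasDerivAt_id x).neg.exp)
    rw [h1.deriv, abs_of_neg hx]; ring
  · subst hx
    rw [phi_hasDerivAt_zero.deriv]; simp
  · have hev : phi =ᶠ[nhds x] fun y => (1 - y) * Real.exp y := by
      filter_upwards [Ioi_mem_nhds hx] with y hy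
      have hy' : (0:ℝ) < y := hy
      simp only [phi, abs_of_pos hy']
    rw [hev.deriv_eq]
    have h1 : HasDerivAt (fun y : ℝ => (1 - y) * Real.exp y)
        ((-1) * Real.exp x + (1 - x) * Real.exp x) x := by
      have h2 : HasDerivAt (fun y : ℝ => 1 - y) (-1) x := (hasDerivAt_id x).const_sub 1
      exact h2.mul (Real.hasDerivAt_exp x)
    rw [h1.deriv, abs_of_pos hx]; ring

lemma xexp_strictMono : StrictMono (fun x : ℝ => x * Real.exp |x|) := by
  intro u v huv
  simp only
  rcases le_or_gt 0 u with hu | hu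
  · have hv : 0 < v := lt_of_le_of_lt hu huv
    rw [abs_of_nonneg hu, abs_of_pos hv]
    have h1 : Real.exp u ≤ Real.exp v := Real.exp_le_exp.mpr huv.le
    nlinarith [Real.exp_pos u, Real.exp_pos v]
  · rcases le_or_gt v 0 with hv | hv
    · rw [abs_of_neg hu, abs_of_nonpos hv]
      have h1 : Real.exp (-v) ≤ Real.exp (-u) := Real.exp_le_exp.mpr (by linarith)
      nlinarith [Real.exp_pos (-u), Real.exp_pos (-v)]
    · have h1 : u * Real.exp |u| < 0 := mul_neg_of_neg_of_pos hu (Real.exp_pos _)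
      have h2 : 0 < v * Real.exp |v| := mul_pos hv (Real.exp_pos _)
      linarith

lemma phi_concave : ConcaveOn ℝ (Set.Icc (-1 : ℝ) 1) phi := by
  apply StrictConcaveOn.concaveOn
  apply StrictAntiOn.strictConcaveOn_of_deriv (convex_Icc _ _)
  · exact ((continuous_const.sub continuous_abs).mul
      (Real.continuous_exp.comp continuous_abs)).continuousOn
  · rw [phi_deriv]
    intro a _ b _ hab
    simp only [neg_mul, neg_lt_neg_iff]
    exact xexp_strictMono hab

open Finset in
lemma geom_mean_superadd {ι : Type*} (s : Finset ι) (hs : s.Nonempty)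
    (a b : ℝ) (ha : 0 ≤ a) (hb : 0 ≤ b) (hab : a + b = 1)
    (X Y : ι → ℝ) (hX : ∀ i ∈ s, 0 < X i) (hY : ∀ i ∈ s, 0 < Y i) :
    a * ∏ i ∈ s, X i ^ ((s.card : ℝ)⁻¹) + b * ∏ i ∈ s, Y i ^ ((s.card : ℝ)⁻¹)
      ≤ ∏ i ∈ s, (a * X i + b * Y i) ^ ((s.card : ℝ)⁻¹) := by
  set w : ℝ := (s.card : ℝ)⁻¹ with hw_def
  have hcard : (0:ℝ) < s.card := by exact_mod_cast Finset.card_pos.mpr hs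
  have hw : 0 ≤ w := by positivity
  have hwsum : ∑ _i ∈ s, w = 1 := by
    rw [Finset.sum_const, nsmul_eq_mul, hw_def]
    field_simp
  set Z : ι → ℝ := fun i => a * X i + b * Y i with hZ_def
  have hZ : ∀ i ∈ s, 0 < Z i := by
    intro i hi
    have h1 := hX i hi; have h2 := hY i hi
    rcases lt_or_ge 0 a with h | h
    · have h3 : 0 ≤ b * Y i := mul_nonneg hb (h2.le)
      have h4 : 0 < a * X i := mul_pos h h1
      simp only [hZ_def]; linarith
    · have ha0 : a = 0 := le_antisymm h ha
      have hb1 : b = 1 := by linarith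
      simp [hZ_def, ha0, hb1, h2]
  have hZprod : 0 < ∏ i ∈ s, Z i ^ w := by
    apply Finset.prod_pos; intro i hi; exact Real.rpow_pos_of_pos (hZ i hi) w
  -- key estimate
  have key : ∀ P : ι → ℝ, (∀ i ∈ s, 0 ≤ P i) → (∀ i ∈ s, P i ≤ Z i) →
      ∏ i ∈ s, P i ^ w ≤ (∑ i ∈ s, w * (P i / Z i)) * ∏ i ∈ s, Z i ^ w := by
    intro P hP hPZ
    have amgm := Real.geom_mean_le_arith_mean_weighted s (fun _ => w) (fun i => P i / Z i)
      (fun i _ => hw) hwsum (fun i hi => div_nonneg (hP i hi) (hZ i hi).le)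
    have hprod : ∏ i ∈ s, (P i / Z i) ^ w = (∏ i ∈ s, P i ^ w) / ∏ i ∈ s, Z i ^ w := by
      rw [← Finset.prod_div_distrib]
      apply Finset.prod_congr rfl
      intro i hi
      exact Real.div_rpow (hP i hi) (hZ i hi).le w
    rw [hprod, div_le_iff₀ hZprod] at amgm
    exact amgm
  have hXkey := key (fun i => a * X i) (fun i hi => mul_nonneg ha (hX i hi).le)
    (fun i hi => by
      have : 0 ≤ b * Y i := mul_nonneg hb (hY i hi).le
      simp only [hZ_def]; linarith)
  have hYkey := key (fun i => b * Y i) (fun i hi => mul_nonneg hb (hY i hi).le)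
    (fun i hi => by
      have : 0 ≤ a * X i := mul_nonneg ha (hX i hi).le
      simp only [hZ_def]; linarith)
  -- pull scalars out of products
  have pull : ∀ c : ℝ, 0 ≤ c → ∀ U : ι → ℝ, (∀ i ∈ s, 0 ≤ U i) →
      ∏ i ∈ s, (c * U i) ^ w = c * ∏ i ∈ s, U i ^ w := by
    intro c hc U hU
    have h1 : ∀ i ∈ s, (c * U i) ^ w = c ^ w * U i ^ w := fun i hi =>
      Real.mul_rpow hc (hU i hi)
    rw [Finset.prod_congr rfl h1, Finset.prod_mul_distrib, Finset.prod_const]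
    congr 1
    rw [← Real.rpow_natCast (c ^ w) s.card, ← Real.rpow_mul hc]
    rw [show w * (s.card : ℝ) = 1 by rw [hw_def]; field_simp]
    exact Real.rpow_one c
  rw [pull a ha X (fun i hi => (hX i hi).le)] at hXkey
  rw [pull b hb Y (fun i hi => (hY i hi).le)] at hYkey
  have hsum : (∑ i ∈ s, w * (a * X i / Z i)) + (∑ i ∈ s, w * (b * Y i / Z i)) = 1 := by
    rw [← Finset.sum_add_distrib, ← hwsum]
    apply Finset.sum_congr rfl
    intro i hi
    rw [← mul_add, ← add_div, div_self (hZ i hi).ne']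
    ring
  calc a * ∏ i ∈ s, X i ^ w + b * ∏ i ∈ s, Y i ^ w
      ≤ (∑ i ∈ s, w * (a * X i / Z i)) * ∏ i ∈ s, Z i ^ w
        + (∑ i ∈ s, w * (b * Y i / Z i)) * ∏ i ∈ s, Z i ^ w := add_le_add hXkey hYkey
    _ = ∏ i ∈ s, Z i ^ w := by rw [← add_mul, hsum, one_mul]

lemma key_ineq (M : ℝ) (G₁ : ℝ → ℝ) (hG₁ : ContDiff ℝ 2 G₁)
    (heven : ∀ p, G₁ (-p) = G₁ p)
    (hpos : ∀ p : ℝ, 0 < p → 0 < G₁ p ∧ 0 < deriv G₁ p)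
    (hM : M = -sInf ((fun p => deriv (deriv G₁) p / (deriv G₁ p) ^ 2) '' Set.Ioi (0:ℝ)))
    (hMpos : 0 < M) :
    ∀ x : ℝ, 0 ≤ deriv (deriv G₁) x + M * (deriv G₁ x) ^ 2 := by
  obtain ⟨hd1, hd2, hc2⟩ :
      Differentiable ℝ G₁ ∧ Differentiable ℝ (deriv G₁) ∧ Continuous (deriv (deriv G₁)) := by
    have h2 : ContDiff ℝ (1 + 1) G₁ := by norm_num at hG₁ ⊢; exact hG₁
    rw [contDiff_succ_iff_deriv] at h2
    obtain ⟨hd1, -, h1⟩ := h2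
    rw [contDiff_one_iff_deriv] at h1
    exact ⟨hd1, h1.1, h1.2⟩
  have hc1 : Continuous (deriv G₁) := hd2.continuous
  -- the set is bounded below
  have hbdd : BddBelow ((fun p => deriv (deriv G₁) p / (deriv G₁ p) ^ 2) '' Set.Ioi (0:ℝ)) := by
    by_contra hb
    rw [Real.sInf_of_not_bddBelow hb] at hM
    simp at hM
    linarith [hMpos, hM ▸ hMpos]
  -- positive case
  have hposcase : ∀ x : ℝ, 0 < x → 0 ≤ deriv (deriv G₁) x + M * (deriv G₁ x) ^ 2 := by
    intro x hx
    have hmem : deriv (deriv G₁) x / (deriv G₁ x) ^ 2 ∈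
        (fun p => deriv (deriv G₁) p / (deriv G₁ p) ^ 2) '' Set.Ioi (0:ℝ) :=
      Set.mem_image_of_mem _ hx
    have h1 : sInf ((fun p => deriv (deriv G₁) p / (deriv G₁ p) ^ 2) '' Set.Ioi (0:ℝ))
        ≤ deriv (deriv G₁) x / (deriv G₁ x) ^ 2 := csInf_le hbdd hmem
    have h2 : -M ≤ deriv (deriv G₁) x / (deriv G₁ x) ^ 2 := by
      rw [hM]; linarith
    have hsq : 0 < (deriv G₁ x) ^ 2 := pow_pos (hpos x hx).2 2
    rw [le_div_iff₀ hsq] at h2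
    nlinarith
  -- oddness of deriv, evenness of deriv deriv
  have hodd : ∀ x, deriv G₁ (-x) = -deriv G₁ x := by
    intro x
    have h1 : G₁ = fun y => G₁ (-y) := by funext y; rw [heven]
    have h2 : deriv G₁ x = -deriv G₁ (-x) := by
      conv_lhs => rw [h1]
      exact deriv_comp_neg (f := G₁) (x := x)
    linarith
  have heven2 : ∀ x, deriv (deriv G₁) (-x) = deriv (deriv G₁) x := by
    intro x
    have h1 : deriv G₁ = fun y => -deriv G₁ (-y) := by funext y; rw [hodd, neg_neg]
    have h2 : deriv (deriv G₁) x = -deriv (fun y => deriv G₁ (-y)) x := by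
      conv_lhs => rw [h1]
      exact deriv.neg
    rw [deriv_comp_neg (f := deriv G₁) (x := x)] at h2
    rw [h2, neg_neg]
  -- conclude for all x
  intro x
  rcases lt_trichotomy x 0 with hx | hx | hx
  · have := hposcase (-x) (by linarith)
    rw [heven2, hodd] at this
    simpa using this
  · subst hx
    set h : ℝ → ℝ := fun y => deriv (deriv G₁) y + M * (deriv G₁ y) ^ 2 with hh
    have hcont : Continuous h := hc2.add (continuous_const.mul (hc1.pow 2))
    have htend : Filter.Tendsto h (nhdsWithin 0 (Set.Ioi 0)) (nhds (h 0)) :=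
      (hcont.tendsto 0).mono_left nhdsWithin_le_nhds
    have hev : ∀ᶠ y in nhdsWithin (0:ℝ) (Set.Ioi 0), 0 ≤ h y := by
      filter_upwards [self_mem_nhdsWithin] with y hy
      exact hposcase y hy
    exact ge_of_tendsto htend hev
  · exact hposcase x hx

lemma exp_MG_convex (M : ℝ) (G₁ : ℝ → ℝ) (hG₁ : ContDiff ℝ 2 G₁) (hMpos : 0 < M)
    (hkey : ∀ x : ℝ, 0 ≤ deriv (deriv G₁) x + M * (deriv G₁ x) ^ 2) :
    ConvexOn ℝ Set.univ (fun x => Real.exp (M * G₁ x)) := by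
  obtain ⟨hd1, hd2, hc2⟩ :
      Differentiable ℝ G₁ ∧ Differentiable ℝ (deriv G₁) ∧ Continuous (deriv (deriv G₁)) := by
    have h2 : ContDiff ℝ (1 + 1) G₁ := by norm_num at hG₁ ⊢; exact hG₁
    rw [contDiff_succ_iff_deriv] at h2
    obtain ⟨hd1, -, h1⟩ := h2
    rw [contDiff_one_iff_deriv] at h1
    exact ⟨hd1, h1.1, h1.2⟩
  set Φ : ℝ → ℝ := fun x => Real.exp (M * G₁ x) with hΦ
  have hder : ∀ x, HasDerivAt Φ (M * deriv G₁ x * Real.exp (M * G₁ x)) x := by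
    intro x
    have h1 : HasDerivAt (fun y => M * G₁ y) (M * deriv G₁ x) x :=
      ((hd1 x).hasDerivAt).const_mul M
    have h2 := h1.exp
    convert h2 using 1
    ring
  have hderiv : deriv Φ = fun x => M * deriv G₁ x * Real.exp (M * G₁ x) := by
    funext x; exact (hder x).deriv
  have hΦdiff : Differentiable ℝ Φ := fun x => (hder x).differentiableAt
  have hder2 : ∀ x, HasDerivAt (deriv Φ)
      ((M * deriv (deriv G₁) x) * Real.exp (M * G₁ x)
        + (M * deriv G₁ x) * (M * deriv G₁ x * Real.exp (M * G₁ x))) x := by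
    intro x
    rw [hderiv]
    exact (((hd2 x).hasDerivAt).const_mul M).mul (hder x)
  have hΦ2diff : Differentiable ℝ (deriv Φ) := fun x => (hder2 x).differentiableAt
  apply convexOn_univ_of_deriv2_nonneg hΦdiff hΦ2diff
  intro x
  have h1 : deriv^[2] Φ x = deriv (deriv Φ) x := by
    simp [Function.iterate_succ, Function.iterate_one]
  rw [h1, (hder2 x).deriv]
  have h2 := hkey x
  have h3 : (0:ℝ) < Real.exp (M * G₁ x) := Real.exp_pos _
  nlinarith [sq_nonneg (deriv G₁ x), mul_pos hMpos h3]

lemma J_hasDerivAt (c : ℝ) (hc : c ≠ 0) (J : ℝ → ℝ)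
    (hJ : ∀ p, J p = -(Real.log (1 - p) + p) / c) {p : ℝ} (hp : p < 1) :
    HasDerivAt J (((1 - p)⁻¹ - 1) / c) p := by
  have hne : (1 - p) ≠ 0 := by intro h; linarith [sub_eq_zero.mp h]
  have h1 : HasDerivAt (fun y : ℝ => 1 - y) (-1) p := (hasDerivAt_id p).const_sub 1
  have h2 : HasDerivAt (fun y : ℝ => Real.log (1 - y)) ((-1) / (1 - p)) p := h1.log hne
  have h3 : HasDerivAt (fun y : ℝ => -(Real.log (1 - y) + y) / c)
      (-((-1) / (1 - p) + 1) / c) p := by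
    have h4 := (h2.add (hasDerivAt_id p)).neg
    have h5 := h4.div_const c
    exact h5
  have heq : J = fun y => -(Real.log (1 - y) + y) / c := by funext y; exact hJ y
  rw [heq]
  convert h3 using 1
  field_simp
  ring

lemma derivJ_eq (c : ℝ) (hc : c ≠ 0) (J : ℝ → ℝ)
    (hJ : ∀ p, J p = -(Real.log (1 - p) + p) / c) {p : ℝ} (hp : p < 1) :
    deriv J p = ((1 - p)⁻¹ - 1) / c := (J_hasDerivAt c hc J hJ hp).deriv

lemma derivderivJ_eq (c : ℝ) (hc : c ≠ 0) (J : ℝ → ℝ)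
    (hJ : ∀ p, J p = -(Real.log (1 - p) + p) / c) {p : ℝ} (hp : p < 1) :
    deriv (deriv J) p = (1 - p)⁻¹ ^ 2 / c := by
  have hev : deriv J =ᶠ[nhds p] fun y => ((1 - y)⁻¹ - 1) / c := by
    filter_upwards [Iio_mem_nhds hp] with y hy
    exact derivJ_eq c hc J hJ hy
  rw [hev.deriv_eq]
  have hne : (1 - p) ≠ 0 := by intro h; linarith [sub_eq_zero.mp h]
  have h1 : HasDerivAt (fun y : ℝ => 1 - y) (-1) p := (hasDerivAt_id p).const_sub 1
  have h2 : HasDerivAt (fun y : ℝ => (1 - y)⁻¹) (-(-1) / (1 - p) ^ 2) p := h1.inv hne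
  have h3 := (h2.sub_const 1).div_const c
  rw [h3.deriv]
  field_simp

lemma J_nonneg (c : ℝ) (hc : 0 < c) (J : ℝ → ℝ)
    (hJ : ∀ p, J p = -(Real.log (1 - p) + p) / c) {x : ℝ} (h0 : 0 ≤ x) (h1 : x < 1) :
    0 ≤ J x := by
  rw [hJ]
  have hpos : (0:ℝ) < 1 - x := by linarith
  have hlog : Real.log (1 - x) ≤ (1 - x) - 1 := Real.log_le_sub_one_of_pos hpos
  have h2 : Real.log (1 - x) + x ≤ 0 := by linarith
  have h3 : 0 ≤ -(Real.log (1 - x) + x) := by linarith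
  positivity
-- main

theorem stmt16
    (d : ℕ) (hd : 2 ≤ d) (R M : ℝ) (hR : 0 < R)
    (G₁ : ℝ → ℝ) (hG₁ : ContDiff ℝ 2 G₁) (heven : ∀ p, G₁ (-p) = G₁ p)
    (hG₁0 : G₁ 0 = 0)
    (hpos : ∀ p : ℝ, 0 < p → 0 < G₁ p ∧ 0 < deriv G₁ p)
    (hM : M = -sInf ((fun p => deriv (deriv G₁) p / (deriv G₁ p) ^ 2) ''
      Set.Ioi (0:ℝ)))
    (hMpos : 0 < M)
    (J : ℝ → ℝ)
    (hJ : ∀ p, J p = -(Real.log (1 - p) + p) / (M * ((d : ℝ) - 1)))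
    (pR : ℝ) (hpR : pR ∈ Set.Ioo (0:ℝ) 1) (hJpR : J pR = R)
    (Gb : ℝ → ℝ)
    (hGb : ∀ p, Gb p = if |p| ≤ pR then J |p|
      else R + deriv J pR * (|p| - pR) +
        (1 / 2) * deriv (deriv J) pR * (|p| - pR) ^ 2) :
    ∀ r ≤ R,
      Convex ℝ {p : Fin d → ℝ |
        G₁ (p ⟨0, by omega⟩) +
          ∑ i ∈ Finset.univ.erase (⟨0, by omega⟩ : Fin d), Gb (p i) ≤ r} := by
  intro r hr
  obtain ⟨hpR0, hpR1⟩ := hpR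
  set i0 : Fin d := ⟨0, by omega⟩ with hi0
  set s : Finset (Fin d) := Finset.univ.erase i0 with hs
  have hcard : s.card = d - 1 := by
    rw [hs, Finset.card_erase_of_mem (Finset.mem_univ _), Finset.card_univ, Fintype.card_fin]
  have hdR : (2:ℝ) ≤ (d:ℝ) := by exact_mod_cast hd
  have hd1 : (0:ℝ) < (d:ℝ) - 1 := by linarith
  have hcardR : (s.card : ℝ) = (d:ℝ) - 1 := by
    rw [hcard]
    have h1 : 1 ≤ d := by omega
    push_cast [h1]
    ring
  have hs_ne : s.Nonempty := Finset.card_pos.mp (by omega)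
  set c : ℝ := M * ((d:ℝ) - 1) with hc_def
  have hc : 0 < c := mul_pos hMpos hd1
  set w : ℝ := ((d:ℝ) - 1)⁻¹ with hw_def
  have hw_pos : 0 < w := by positivity
  -- derivatives of J at pR
  have hJ'pos : 0 < deriv J pR := by
    rw [derivJ_eq c hc.ne' J hJ hpR1]
    have h0 : (0:ℝ) < 1 - pR := by linarith
    have h1 : (1:ℝ) < (1 - pR)⁻¹ := by
      rw [lt_inv_comm₀ one_pos h0]; simpa using hpR0
    have h2 : (0:ℝ) < (1 - pR)⁻¹ - 1 := by linarith
    positivity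
  have hJ''pos : 0 < deriv (deriv J) pR := by
    rw [derivderivJ_eq c hc.ne' J hJ hpR1]
    have h0 : (0:ℝ) < 1 - pR := by linarith
    positivity
  -- Gb facts
  have hGb_eq : ∀ x : ℝ, |x| ≤ pR → Gb x = J |x| := by
    intro x hx; rw [hGb, if_pos hx]
  have hGb_nonneg : ∀ x : ℝ, 0 ≤ Gb x := by
    intro x; rw [hGb]
    split_ifs with h
    · exact J_nonneg c hc J hJ (abs_nonneg x) (lt_of_le_of_lt h hpR1)
    · push_neg at h
      have h1 : 0 < |x| - pR := by linarith
      have h2 : 0 ≤ deriv J pR * (|x| - pR) := mul_nonneg hJ'pos.le h1.le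
      have h3 : 0 ≤ (1/2) * deriv (deriv J) pR * (|x| - pR) ^ 2 := by positivity
      linarith
  have hGb_le_R_imp : ∀ x : ℝ, Gb x ≤ R → |x| ≤ pR := by
    intro x hx
    by_contra h
    push_neg at h
    rw [hGb, if_neg (not_le.mpr h)] at hx
    have h1 : 0 < |x| - pR := by linarith
    have h2 : 0 < deriv J pR * (|x| - pR) := mul_pos hJ'pos h1
    have h3 : 0 ≤ (1/2) * deriv (deriv J) pR * (|x| - pR) ^ 2 := by positivity
    linarith
  -- G₁ nonneg
  have hG1nonneg : ∀ x : ℝ, 0 ≤ G₁ x := by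
    intro x
    rcases lt_trichotomy x 0 with hx | hx | hx
    · have h1 := (hpos (-x) (by linarith)).1
      rw [heven x] at h1
      exact h1.le
    · subst hx; rw [hG₁0]
    · exact (hpos x hx).1.le
  -- phi positivity on the relevant range
  have hphi_pos : ∀ x : ℝ, |x| ≤ pR → 0 < phi x := by
    intro x hx
    have h1 : |x| < 1 := lt_of_le_of_lt hx hpR1
    have h2 : 0 < 1 - |x| := by linarith
    unfold phi; positivity
  -- key exponential identity
  have hexp : ∀ x : ℝ, |x| ≤ pR → Real.exp (-(M * Gb x)) = phi x ^ w := by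
    intro x hx
    have h1 : |x| < 1 := lt_of_le_of_lt hx hpR1
    have h2 : (0:ℝ) < 1 - |x| := by linarith
    rw [hGb_eq x hx, hJ]
    have h3 : -(M * (-(Real.log (1 - |x|) + |x|) / (M * ((d:ℝ) - 1))))
        = (Real.log (1 - |x|) + |x|) * w := by
      rw [hw_def]
      field_simp
    rw [h3, Real.rpow_def_of_pos (hphi_pos x hx)]
    congr 1
    unfold phi
    rw [Real.log_mul h2.ne' (Real.exp_pos _).ne', Real.log_exp]
  -- the ambient convex set and functions
  set E : Set (Fin d → ℝ) := {p | ∀ i ∈ s, |p i| ≤ pR} with hE_def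
  have hE_convex : Convex ℝ E := by
    intro x hx y hy a b ha hb hab i hi
    have h1 : (a • x + b • y) i = a * x i + b * y i := by
      simp [Pi.add_apply, Pi.smul_apply, smul_eq_mul]
    rw [h1]
    calc |a * x i + b * y i| ≤ |a * x i| + |b * y i| := abs_add_le _ _
      _ = a * |x i| + b * |y i| := by
          rw [abs_mul, abs_mul, abs_of_nonneg ha, abs_of_nonneg hb]
      _ ≤ a * pR + b * pR := by
          have := hx i hi; have := hy i hi
          gcongr
      _ = pR := by rw [← add_mul, hab, one_mul]
  set W : (Fin d → ℝ) → ℝ := fun p => Real.exp (M * (r - ∑ i ∈ s, Gb (p i))) with hW_def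
  have hW_eq : ∀ p ∈ E, W p = Real.exp (M * r) * ∏ i ∈ s, phi (p i) ^ w := by
    intro p hp
    simp only [hW_def]
    have h1 : M * (r - ∑ i ∈ s, Gb (p i)) = M * r + ∑ i ∈ s, -(M * Gb (p i)) := by
      rw [Finset.sum_neg_distrib, ← Finset.mul_sum]
      ring
    rw [h1, Real.exp_add, Real.exp_sum]
    congr 1
    exact Finset.prod_congr rfl fun i hi => hexp (p i) (hp i hi)
  have hW_concave : ConcaveOn ℝ E W := by
    refine ⟨hE_convex, ?_⟩
    intro x hx y hy a b ha hb hab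
    have hz : a • x + b • y ∈ E := hE_convex hx hy ha hb hab
    simp only [smul_eq_mul]
    rw [hW_eq x hx, hW_eq y hy, hW_eq _ hz]
    have hXpos : ∀ i ∈ s, 0 < phi (x i) := fun i hi => hphi_pos _ (hx i hi)
    have hYpos : ∀ i ∈ s, 0 < phi (y i) := fun i hi => hphi_pos _ (hy i hi)
    have hwcard : w = ((s.card : ℝ))⁻¹ := by rw [hw_def, hcardR]
    have step1 : a * ∏ i ∈ s, phi (x i) ^ w + b * ∏ i ∈ s, phi (y i) ^ w
        ≤ ∏ i ∈ s, (a * phi (x i) + b * phi (y i)) ^ w := by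
      rw [hwcard]
      exact geom_mean_superadd s hs_ne a b ha hb hab _ _ hXpos hYpos
    have step2 : ∏ i ∈ s, (a * phi (x i) + b * phi (y i)) ^ w
        ≤ ∏ i ∈ s, phi ((a • x + b • y) i) ^ w := by
      apply Finset.prod_le_prod
      · intro i hi
        have h1 := hXpos i hi; have h2 := hYpos i hi
        have h3 : 0 ≤ a * phi (x i) + b * phi (y i) := by
          have := mul_nonneg ha h1.le; have := mul_nonneg hb h2.le; linarith
        positivity
      · intro i hi
        apply Real.rpow_le_rpow
        · have h1 := hXpos i hi; have h2 := hYpos i hi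
          have := mul_nonneg ha h1.le; have := mul_nonneg hb h2.le; linarith
        · have hmem : ∀ u : ℝ, |u| ≤ pR → u ∈ Set.Icc (-1:ℝ) 1 := by
            intro u hu
            have h1 : |u| ≤ 1 := le_of_lt (lt_of_le_of_lt hu hpR1)
            exact Set.mem_Icc.mpr (abs_le.mp h1)
          have hconc := phi_concave.2 (hmem _ (hx i hi)) (hmem _ (hy i hi)) ha hb hab
          simp only [smul_eq_mul] at hconc
          have h4 : (a • x + b • y) i = a * x i + b * y i := by
            simp [Pi.add_apply, Pi.smul_apply, smul_eq_mul]
          rw [h4]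
          exact hconc
        · exact hw_pos.le
    have hexpMr : (0:ℝ) < Real.exp (M * r) := Real.exp_pos _
    calc a * (Real.exp (M * r) * ∏ i ∈ s, phi (x i) ^ w)
          + b * (Real.exp (M * r) * ∏ i ∈ s, phi (y i) ^ w)
        = Real.exp (M * r) * (a * ∏ i ∈ s, phi (x i) ^ w + b * ∏ i ∈ s, phi (y i) ^ w) := by
          ring
      _ ≤ Real.exp (M * r) * ∏ i ∈ s, phi ((a • x + b • y) i) ^ w := by
          apply mul_le_mul_of_nonneg_left _ hexpMr.le
          exact le_trans step1 step2
  -- convexity of F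
  set F : (Fin d → ℝ) → ℝ := fun p => Real.exp (M * G₁ (p i0)) - W p with hF_def
  have hF_convex : ConvexOn ℝ E F := by
    have hΦ := exp_MG_convex M G₁ hG₁ hMpos (key_ineq M G₁ hG₁ heven hpos hM hMpos)
    have hproj := hΦ.comp_linearMap (LinearMap.proj i0 : (Fin d → ℝ) →ₗ[ℝ] ℝ)
    rw [Set.preimage_univ] at hproj
    have hcomp : ConvexOn ℝ E (fun p : Fin d → ℝ => Real.exp (M * G₁ (p i0))) :=
      (hproj.subset (Set.subset_univ E) hE_convex)
    have := hcomp.sub hW_concave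
    exact this
  -- set equality
  have hset : {p : Fin d → ℝ | G₁ (p i0) + ∑ i ∈ s, Gb (p i) ≤ r}
      = {p : Fin d → ℝ | p ∈ E ∧ F p ≤ 0} := by
    ext p
    simp only [Set.mem_setOf_eq]
    constructor
    · intro hp
      have hEp : p ∈ E := by
        intro i hi
        apply hGb_le_R_imp
        have h1 : Gb (p i) ≤ ∑ j ∈ s, Gb (p j) :=
          Finset.single_le_sum (fun j _ => hGb_nonneg (p j)) hi
        have h2 := hG1nonneg (p i0)
        linarith
      refine ⟨hEp, ?_⟩
      rw [hF_def]
      simp only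
      rw [sub_nonpos, hW_def]
      apply Real.exp_le_exp.mpr
      apply mul_le_mul_of_nonneg_left _ hMpos.le
      linarith
    · rintro ⟨hEp, hFp⟩
      rw [hF_def] at hFp
      simp only at hFp
      rw [sub_nonpos, hW_def] at hFp
      have h1 := Real.exp_le_exp.mp hFp
      have h2 : G₁ (p i0) ≤ r - ∑ i ∈ s, Gb (p i) :=
        le_of_mul_le_mul_left (by linarith) hMpos
      linarith
  show Convex ℝ {p : Fin d → ℝ | G₁ (p i0) + ∑ i ∈ s, Gb (p i) ≤ r}
  rw [hset]
  have := hF_convex.convex_le 0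
  convert this using 1
end
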